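/- arXiv:1907.12234 — 8 statements merged into one kernel-verified Lean document; each statement's English description precedes it below -/
import Mathlib

section
/- Let n ≥ 1, let g₁, g₂ ∈ ℂⁿ with g₁ ≠ 0, let P > 0, and let φ be a real number with 0 ≤ φ ≤ P·‖g₁‖². Consider the feasible set F = {Q : Q an n×n complex positive semidefinite matrix, g₁ᴴQg₁ = φ, Re(Tr Q) ≤ P}. Then F is nonempty, and there exists Q* ∈ F that minimizes the objective Q ↦ g₂ᴴQg₂ over F and satisfies rank(Q*) ≤ 1. (This is Lemma 2 of the paper: beamforming, i.e., a rank-one jamming covariance, is optimal for attaining the upper boundary of the suspicious-links rate region.) -/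
open Matrix
open scoped ComplexOrder

section helpers
variable {n : ℕ}

lemma vecMulVec_mulVec' (v u x : Fin n → ℂ) :
    (vecMulVec v u).mulVec x = (u ⬝ᵥ x) • v := by
  ext i
  simp only [vecMulVec_apply, mulVec, dotProduct, Pi.smul_apply, smul_eq_mul,
    Finset.sum_mul]
  exact Finset.sum_congr rfl (fun j _ => by ring)

lemma quadform_vecMulVec (v x y : Fin n → ℂ) :
    star x ⬝ᵥ (vecMulVec v (star v)).mulVec y = (star x ⬝ᵥ v) * (star v ⬝ᵥ y) := by
  rw [vecMulVec_mulVec']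
  simp [dotProduct_smul, mul_comm]

lemma posSemidef_vecMulVec_star (v : Fin n → ℂ) : (vecMulVec v (star v)).PosSemidef := by
  refine Matrix.PosSemidef.of_dotProduct_mulVec_nonneg ?_ ?_
  · ext i j
    simp [conjTranspose_apply, vecMulVec_apply, mul_comm]
  · intro x
    rw [quadform_vecMulVec]
    have : star v ⬝ᵥ x = starRingEnd ℂ (star x ⬝ᵥ v) := Matrix.star_dotProduct _ _
    rw [this, Complex.mul_conj]
    exact_mod_cast Complex.normSq_nonneg _

local notation "⟪" x ", " y "⟫" => inner (𝕜 := ℂ) x y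

lemma bessel_two {E : Type*} [NormedAddCommGroup E] [InnerProductSpace ℂ E]
    (a w x : E) (h : ⟪a, w⟫ = 0) :
    ‖a‖^2 * ‖⟪w, x⟫‖^2 + ‖w‖^2 * ‖⟪a, x⟫‖^2 ≤ ‖a‖^2 * ‖w‖^2 * ‖x‖^2 := by
  by_cases ha : a = 0
  · simp [ha]
  by_cases hw : w = 0
  · simp [hw]
  have hA : (0:ℝ) < ‖a‖^2 := pow_pos (norm_pos_iff.2 ha) 2
  have hW : (0:ℝ) < ‖w‖^2 := pow_pos (norm_pos_iff.2 hw) 2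
  set c : ℂ := ⟪a, x⟫ / ((‖a‖^2 : ℝ) : ℂ) with hc
  set d : ℂ := ⟪w, x⟫ / ((‖w‖^2 : ℝ) : ℂ) with hd
  have hwa : ⟪w, a⟫ = 0 := by rw [← inner_conj_symm, h, map_zero]
  have haa : ⟪a, a⟫ = ((‖a‖^2 : ℝ) : ℂ) := by
    rw [inner_self_eq_norm_sq_to_K]; norm_cast
  have hww : ⟪w, w⟫ = ((‖w‖^2 : ℝ) : ℂ) := by
    rw [inner_self_eq_norm_sq_to_K]; norm_cast
  have hAne : ((‖a‖^2 : ℝ) : ℂ) ≠ 0 := by exact_mod_cast hA.ne'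
  have hAne' : ((‖a‖:ℂ))^2 ≠ 0 := by exact_mod_cast hA.ne'
  have hWne' : ((‖w‖:ℂ))^2 ≠ 0 := by exact_mod_cast hW.ne'
  have hWne : ((‖w‖^2 : ℝ) : ℂ) ≠ 0 := by exact_mod_cast hW.ne'
  set u : E := c • a + d • w with hu
  have hay : ⟪a, x - u⟫ = 0 := by
    simp only [hu, inner_sub_right, inner_add_right, inner_smul_right, h, haa, mul_zero, add_zero,
      hc]
    rw [div_mul_eq_mul_div]
    push_cast
    rw [mul_div_assoc, div_self hAne', mul_one, sub_self]
  have hwy : ⟪w, x - u⟫ = 0 := by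
    simp only [hu, inner_sub_right, inner_add_right, inner_smul_right, hwa, hww, mul_zero, zero_add,
      hd]
    rw [div_mul_eq_mul_div]
    push_cast
    rw [mul_div_assoc, div_self hWne', mul_one, sub_self]
  have huy : ⟪u, x - u⟫ = 0 := by
    have : ⟪c • a + d • w, x - u⟫ = 0 := by
      rw [inner_add_left, inner_smul_left, inner_smul_left, hay, hwy]; simp
    exact this
  have hnu : ‖u‖^2 = ‖c‖^2 * ‖a‖^2 + ‖d‖^2 * ‖w‖^2 := by
    rw [hu, @norm_add_sq ℂ]
    simp [inner_smul_left, inner_smul_right, h, norm_smul, mul_pow]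
  have hx : ‖x‖^2 = ‖u‖^2 + ‖x - u‖^2 := by
    have : x = u + (x - u) := by abel
    rw [this]
    rw [@norm_add_sq ℂ, huy]
    simp
  have hcn : ‖c‖^2 = ‖⟪a, x⟫‖^2 / (‖a‖^2)^2 := by
    rw [hc, norm_div, div_pow]
    norm_num
  have hdn : ‖d‖^2 = ‖⟪w, x⟫‖^2 / (‖w‖^2)^2 := by
    rw [hd, norm_div, div_pow]
    norm_num
  have hxu : ‖c‖^2 * ‖a‖^2 + ‖d‖^2 * ‖w‖^2 ≤ ‖x‖^2 := by
    rw [hx, hnu]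
    nlinarith [sq_nonneg (‖x - u‖)]
  rw [hcn, hdn] at hxu
  have := mul_le_mul_of_nonneg_left hxu (le_of_lt (mul_pos hA hW))
  calc ‖a‖^2 * ‖⟪w, x⟫‖^2 + ‖w‖^2 * ‖⟪a, x⟫‖^2
      = ‖a‖^2 * ‖w‖^2 * (‖⟪a, x⟫‖^2 / (‖a‖^2)^2 * ‖a‖^2 + ‖⟪w, x⟫‖^2 / (‖w‖^2)^2 * ‖w‖^2) := by
        field_simp; ring
    _ ≤ ‖a‖^2 * ‖w‖^2 * ‖x‖^2 := this

noncomputable def ee {n : ℕ} (x : Fin n → ℂ) : EuclideanSpace ℂ (Fin n) :=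
  (WithLp.equiv 2 _).symm x

lemma inner_ee {n : ℕ} (x y : Fin n → ℂ) : ⟪ee x, ee y⟫ = star x ⬝ᵥ y :=
  by rw [dotProduct_comm]; rfl

lemma norm_ee_sq {n : ℕ} (x : Fin n → ℂ) : ‖ee x‖^2 = (star x ⬝ᵥ x).re := by
  rw [← inner_self_eq_norm_sq (𝕜 := ℂ), inner_ee]; rfl

lemma quadform_decomp {n : ℕ} (B : Matrix (Fin n) (Fin n) ℂ) (x y : Fin n → ℂ) :
    star x ⬝ᵥ (Bᴴ * B).mulVec y = star (B.mulVec x) ⬝ᵥ (B.mulVec y) := by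
  rw [← mulVec_mulVec, dotProduct_mulVec, star_mulVec]

open scoped MatrixOrder in
lemma psd_exists_ct {n : ℕ} {Q : Matrix (Fin n) (Fin n) ℂ} (hQ : Q.PosSemidef) :
    ∃ B : Matrix (Fin n) (Fin n) ℂ, Q = Bᴴ * B := by
  obtain ⟨B, hB⟩ := CStarAlgebra.nonneg_iff_eq_star_mul_self.mp hQ.nonneg
  exact ⟨B, hB⟩

lemma psd_cauchy_schwarz {n : ℕ} {Q : Matrix (Fin n) (Fin n) ℂ} (hQ : Q.PosSemidef)
    (x y : Fin n → ℂ) :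
    ‖star x ⬝ᵥ Q.mulVec y‖^2 ≤ (star x ⬝ᵥ Q.mulVec x).re * (star y ⬝ᵥ Q.mulVec y).re := by
  obtain ⟨B, rfl⟩ := psd_exists_ct hQ
  rw [quadform_decomp, quadform_decomp, quadform_decomp, ← norm_ee_sq, ← norm_ee_sq,
    ← inner_ee, ← mul_pow]
  exact pow_le_pow_left₀ (norm_nonneg _) (norm_inner_le_norm _ _) 2

lemma psd_conj_symm {n : ℕ} {Q : Matrix (Fin n) (Fin n) ℂ} (hQ : Q.PosSemidef)
    (x y : Fin n → ℂ) :
    star y ⬝ᵥ Q.mulVec x = starRingEnd ℂ (star x ⬝ᵥ Q.mulVec y) := by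
  obtain ⟨B, rfl⟩ := psd_exists_ct hQ
  rw [quadform_decomp, quadform_decomp, ← inner_ee, ← inner_ee, inner_conj_symm]

lemma re_dot_self_sum {n : ℕ} (x : Fin n → ℂ) :
    (star x ⬝ᵥ x).re = ∑ i, Complex.normSq (x i) := by
  rw [dotProduct, Complex.re_sum]
  refine Finset.sum_congr rfl fun i _ => ?_
  simp [Complex.normSq_apply, Complex.mul_re]

lemma quadform_sum {n : ℕ} (B : Matrix (Fin n) (Fin n) ℂ) (y : Fin n → ℂ) :
    (star y ⬝ᵥ (Bᴴ * B).mulVec y).re = ∑ i, ‖⟪ee (star (B i)), ee y⟫‖^2 := by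
  rw [quadform_decomp, re_dot_self_sum]
  refine Finset.sum_congr rfl fun i _ => ?_
  rw [inner_ee, star_star]
  rw [Complex.sq_norm]
  rfl

lemma trace_sum {n : ℕ} (B : Matrix (Fin n) (Fin n) ℂ) :
    (Bᴴ * B).trace.re = ∑ i, ‖ee (star (B i))‖^2 := by
  rw [Matrix.trace_mul_comm, Matrix.trace, Complex.re_sum]
  refine Finset.sum_congr rfl fun i _ => ?_
  rw [norm_ee_sq, Matrix.diag_apply, Matrix.mul_apply, Complex.re_sum, re_dot_self_sum]
  refine Finset.sum_congr rfl fun j _ => ?_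
  simp [Matrix.conjTranspose_apply, Complex.normSq_apply, Complex.mul_re]

lemma psd_bessel {n : ℕ} {Q : Matrix (Fin n) (Fin n) ℂ} (hQ : Q.PosSemidef)
    {a w : Fin n → ℂ} (h : star a ⬝ᵥ w = 0) :
    (star a ⬝ᵥ a).re * (star w ⬝ᵥ Q.mulVec w).re
      + (star w ⬝ᵥ w).re * (star a ⬝ᵥ Q.mulVec a).re
      ≤ (star a ⬝ᵥ a).re * (star w ⬝ᵥ w).re * Q.trace.re := by
  obtain ⟨B, rfl⟩ := psd_exists_ct hQ
  have h' : ⟪ee a, ee w⟫ = 0 := by rw [inner_ee, h]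
  rw [quadform_sum, quadform_sum, trace_sum, ← norm_ee_sq, ← norm_ee_sq,
    Finset.mul_sum, Finset.mul_sum, Finset.mul_sum, ← Finset.sum_add_distrib]
  refine Finset.sum_le_sum fun i _ => ?_
  have := bessel_two (ee a) (ee w) (ee (star (B i))) h'
  calc ‖ee a‖^2 * ‖⟪ee (star (B i)), ee w⟫‖^2 + ‖ee w‖^2 * ‖⟪ee (star (B i)), ee a⟫‖^2
      = ‖ee a‖^2 * ‖⟪ee w, ee (star (B i))⟫‖^2 + ‖ee w‖^2 * ‖⟪ee a, ee (star (B i))⟫‖^2 := by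
        rw [norm_inner_symm (ee w), norm_inner_symm (ee a)]
    _ ≤ ‖ee a‖^2 * ‖ee w‖^2 * ‖ee (star (B i))‖^2 := this

lemma trace_vecMulVec_star {n : ℕ} (v : Fin n → ℂ) :
    (vecMulVec v (star v)).trace = star v ⬝ᵥ v := by
  simp [Matrix.trace, Matrix.diag, vecMulVec_apply, dotProduct, mul_comm]

lemma rank_vecMulVec_le' {n : ℕ} (v u : Fin n → ℂ) : (vecMulVec v u).rank ≤ 1 := by
  rw [vecMulVec_eq Unit]
  refine (rank_mul_le_left _ _).trans ?_
  exact (rank_le_card_width _).trans (by simp)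

lemma dot_self_real {n : ℕ} (x : Fin n → ℂ) :
    star x ⬝ᵥ x = (((star x ⬝ᵥ x).re : ℝ) : ℂ) := by
  rw [re_dot_self_sum, dotProduct]
  push_cast
  refine Finset.sum_congr rfl fun i _ => ?_
  rw [Pi.star_apply, Complex.star_def, mul_comm, Complex.mul_conj]

lemma re_nonneg_of_psd {n : ℕ} {Q : Matrix (Fin n) (Fin n) ℂ} (hQ : Q.PosSemidef)
    (x : Fin n → ℂ) : 0 ≤ (star x ⬝ᵥ Q.mulVec x).re := by
  have := hQ.dotProduct_mulVec_nonneg x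
  rw [Complex.le_def] at this
  simpa using this.1

lemma quadform_real {n : ℕ} {Q : Matrix (Fin n) (Fin n) ℂ} (hQ : Q.PosSemidef)
    (x : Fin n → ℂ) :
    star x ⬝ᵥ Q.mulVec x = (((star x ⬝ᵥ Q.mulVec x).re : ℝ) : ℂ) := by
  have h := psd_conj_symm hQ x x
  have him : (star x ⬝ᵥ Q.mulVec x).im = 0 := Complex.conj_eq_iff_im.mp h.symm
  exact Complex.ext (by simp) (by simp [him])

lemma lower_bound_helper {X t y cross : ℝ} (hy : 0 ≤ y) (hyt : y ≤ t) (htX : t ≤ X)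
    (hcross : -(X * y) ≤ cross) : (X - t) ^ 2 ≤ X ^ 2 + 2 * cross + y ^ 2 := by
  nlinarith [mul_nonneg (sub_nonneg.mpr hyt) (show (0:ℝ) ≤ 2 * X - y - t by linarith)]

end helpers


set_option maxHeartbeats 1000000 in
/-- Lemma 2 of the paper: the feasible set of the upper-boundary problem is nonempty and
admits a rank-at-most-one minimizer of the jamming power leaked to receiver 2. -/
theorem stmt1 (n : ℕ) (hn : 1 ≤ n) (g₁ g₂ : Fin n → ℂ) (hg₁ : g₁ ≠ 0)
    (P φ : ℝ) (hP : 0 < P) (hφ0 : 0 ≤ φ) (hφ : φ ≤ P * (star g₁ ⬝ᵥ g₁).re) :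
    (∃ Q : Matrix (Fin n) (Fin n) ℂ,
        Q.PosSemidef ∧ (star g₁ ⬝ᵥ Q.mulVec g₁).re = φ ∧ Q.trace.re ≤ P) ∧
    ∃ Qs : Matrix (Fin n) (Fin n) ℂ,
      (Qs.PosSemidef ∧ (star g₁ ⬝ᵥ Qs.mulVec g₁).re = φ ∧ Qs.trace.re ≤ P) ∧
      (∀ Q : Matrix (Fin n) (Fin n) ℂ,
        Q.PosSemidef → (star g₁ ⬝ᵥ Q.mulVec g₁).re = φ → Q.trace.re ≤ P →
          (star g₂ ⬝ᵥ Qs.mulVec g₂).re ≤ (star g₂ ⬝ᵥ Q.mulVec g₂).re) ∧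
      Qs.rank ≤ 1 := by
  classical
  set N : ℝ := (star g₁ ⬝ᵥ g₁).re with hNdef
  have hNpos : 0 < N := by
    obtain ⟨i, hi⟩ := Function.ne_iff.mp hg₁
    rw [hNdef, re_dot_self_sum]
    exact Finset.sum_pos' (fun j _ => Complex.normSq_nonneg _)
      ⟨i, Finset.mem_univ i, by simpa [Complex.normSq_pos] using hi⟩
  have hNC : star g₁ ⬝ᵥ g₁ = (N : ℂ) := dot_self_real g₁
  have hNCne : (N : ℂ) ≠ 0 := by exact_mod_cast hNpos.ne'
  have htP : φ / N ≤ P := (div_le_iff₀ hNpos).mpr (by linarith [hφ])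
  set β : ℂ := star g₁ ⬝ᵥ g₂ with hβdef
  set w : Fin n → ℂ := g₂ - (β / (N : ℂ)) • g₁ with hwdef
  have haw : star g₁ ⬝ᵥ w = 0 := by
    rw [hwdef]
    simp only [dotProduct_sub, dotProduct_smul, hNC, smul_eq_mul]
    rw [div_mul_cancel₀ _ hNCne, ← hβdef, sub_self]
  have hwa : star w ⬝ᵥ g₁ = 0 := by
    rw [star_dotProduct, haw, star_zero]
  set W : ℝ := (star w ⬝ᵥ w).re with hWdef
  have hWnn : 0 ≤ W := by rw [hWdef, re_dot_self_sum]; exact Finset.sum_nonneg fun i _ => Complex.normSq_nonneg _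
  have hWC : star w ⬝ᵥ w = (W : ℂ) := dot_self_real w
  have hbd : g₂ = (β / (N : ℂ)) • g₁ + w := by rw [hwdef]; abel
  set α : ℝ := Real.sqrt φ / N with hαdef
  have hα0 : 0 ≤ α := div_nonneg (Real.sqrt_nonneg _) hNpos.le
  set v : ℂ → (Fin n → ℂ) := fun γ => ((α : ℝ) : ℂ) • g₁ + γ • w with hvdef
  have hbw : star g₂ ⬝ᵥ w = (W : ℂ) := by
    rw [hbd]
    simp only [star_add, star_smul, add_dotProduct, smul_dotProduct, haw, smul_eq_mul, mul_zero,
      zero_add, hWC]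
  have hba : star g₂ ⬝ᵥ g₁ = starRingEnd ℂ β := by
    rw [hβdef, star_dotProduct]; rfl
  have hsav : ∀ γ, star g₁ ⬝ᵥ v γ = ((Real.sqrt φ : ℝ) : ℂ) := by
    intro γ
    rw [hvdef]
    simp only [dotProduct_add, dotProduct_smul, hNC, haw, smul_eq_mul, mul_zero, add_zero, hαdef]
    push_cast
    field_simp
  have hsbv : ∀ γ, star g₂ ⬝ᵥ v γ = ((α : ℝ) : ℂ) * starRingEnd ℂ β + γ * (W : ℂ) := by
    intro γ
    rw [hvdef]
    simp only [dotProduct_add, dotProduct_smul, hba, hbw, smul_eq_mul]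
  have hsvv : ∀ γ, star (v γ) ⬝ᵥ v γ = ((φ / N + Complex.normSq γ * W : ℝ) : ℂ) := by
    intro γ
    rw [hvdef]
    simp only [star_add, star_smul, add_dotProduct, dotProduct_add, smul_dotProduct,
      dotProduct_smul, hNC, hWC, haw, hwa, smul_eq_mul, mul_zero, zero_add, add_zero]
    rw [Complex.star_def, Complex.conj_ofReal]
    have hr : α * α * N = φ / N := by
      rw [hαdef]; field_simp; nlinarith [Real.mul_self_sqrt hφ0]
    have hγγ : γ * ((starRingEnd ℂ) γ * (W:ℂ)) = ((Complex.normSq γ * W : ℝ) : ℂ) := by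
      rw [← mul_assoc, Complex.mul_conj]; push_cast; ring
    rw [hγγ]
    have hr' : ((α:ℝ):ℂ) * (((α:ℝ):ℂ) * (N:ℂ)) = ((φ/N : ℝ):ℂ) := by
      rw [← hr]; push_cast; ring
    rw [hr']
    push_cast; ring
  set Qg : ℂ → Matrix (Fin n) (Fin n) ℂ := fun γ => vecMulVec (v γ) (star (v γ)) with hQg
  have hQpsd : ∀ γ, (Qg γ).PosSemidef := fun γ => posSemidef_vecMulVec_star _
  have hQcon : ∀ γ, (star g₁ ⬝ᵥ (Qg γ).mulVec g₁).re = φ := by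
    intro γ
    rw [hQg]
    rw [quadform_vecMulVec,
      show star (v γ) ⬝ᵥ g₁ = star (star g₁ ⬝ᵥ v γ) from Matrix.star_dotProduct _ _,
      hsav]
    rw [show star (((Real.sqrt φ : ℝ) : ℂ)) = ((Real.sqrt φ : ℝ) : ℂ) by
      rw [Complex.star_def, Complex.conj_ofReal]]
    rw [show ((Real.sqrt φ : ℝ) : ℂ) * ((Real.sqrt φ : ℝ) : ℂ)
        = ((Real.sqrt φ * Real.sqrt φ : ℝ) : ℂ) by push_cast; ring]
    rw [Real.mul_self_sqrt hφ0]
    exact Complex.ofReal_re _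
  have hQtr : ∀ γ, (Qg γ).trace.re = φ / N + Complex.normSq γ * W := by
    intro γ
    rw [hQg, trace_vecMulVec_star, hsvv]
    exact Complex.ofReal_re _
  have hQobj : ∀ γ, (star g₂ ⬝ᵥ (Qg γ).mulVec g₂).re
      = Complex.normSq (((α : ℝ) : ℂ) * (starRingEnd ℂ) β + γ * (W : ℂ)) := by
    intro γ
    rw [hQg, quadform_vecMulVec,
      show star (v γ) ⬝ᵥ g₂ = star (star g₂ ⬝ᵥ v γ) from Matrix.star_dotProduct _ _,
      hsbv, Complex.star_def, Complex.mul_conj]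
    exact Complex.ofReal_re _
  have hfeas : ∀ γ : ℂ, Complex.normSq γ * W ≤ P - φ / N →
      (Qg γ).PosSemidef ∧ (star g₁ ⬝ᵥ (Qg γ).mulVec g₁).re = φ ∧ (Qg γ).trace.re ≤ P :=
    fun γ h => ⟨hQpsd γ, hQcon γ, by rw [hQtr]; linarith⟩
  have h0feas := hfeas 0 (by simp; linarith)
  refine ⟨⟨Qg 0, h0feas⟩, ?_⟩
  by_cases hex : ∃ γ : ℂ, ((α : ℝ) : ℂ) * (starRingEnd ℂ) β + γ * (W : ℂ) = 0 ∧
      Complex.normSq γ * W ≤ P - φ / N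
  · obtain ⟨γ₀, hγ0, hγtr⟩ := hex
    refine ⟨Qg γ₀, hfeas γ₀ hγtr, fun Q hQ hcon ht => ?_, rank_vecMulVec_le' _ _⟩
    rw [hQobj, hγ0]
    simpa using re_nonneg_of_psd hQ g₂
  · push_neg at hex
    have hαβpos : 0 < α * ‖β‖ := by
      rcases (mul_nonneg hα0 (norm_nonneg β)).lt_or_eq with h | h
      · exact h
      · exfalso
        have h1 : ((α : ℝ) : ℂ) * (starRingEnd ℂ) β = 0 := by
          rcases mul_eq_zero.mp h.symm with h2 | h2
          · rw [h2]; simp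
          · rw [norm_eq_zero] at h2; rw [h2]; simp
        have := hex 0 (by simpa using h1)
        simp at this
        linarith
    have hβne : β ≠ 0 := by
      intro h; rw [h] at hαβpos; simp at hαβpos
    set s : ℝ := W * (P - φ / N) with hsdef
    have hs0 : 0 ≤ s := mul_nonneg hWnn (by linarith)
    have hskey : s < (α * ‖β‖) ^ 2 := by
      by_cases hW : W = 0
      · rw [hsdef, hW, zero_mul]
        positivity
      · have hWpos : 0 < W := lt_of_le_of_ne hWnn (Ne.symm hW)
        have hWCne : ((W : ℝ) : ℂ) ≠ 0 := by exact_mod_cast hW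
        set γ1 : ℂ := -(((α : ℝ) : ℂ) * (starRingEnd ℂ) β) / ((W : ℝ) : ℂ) with hγ1
        have heq : ((α : ℝ) : ℂ) * (starRingEnd ℂ) β + γ1 * ((W : ℝ) : ℂ) = 0 := by
          rw [hγ1]; field_simp; ring
        have hlt := hex γ1 heq
        have hnγ : Complex.normSq γ1 = (α * ‖β‖) ^ 2 / W ^ 2 := by
          rw [hγ1]
          rw [Complex.normSq_div, Complex.normSq_neg, Complex.normSq_mul, Complex.normSq_conj]
          rw [Complex.normSq_ofReal, Complex.normSq_ofReal, ← Complex.sq_norm]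
          ring
        rw [hnγ] at hlt
        have h5 : (P - φ / N) * W < (α * ‖β‖) ^ 2 := by
          have := mul_lt_mul_of_pos_right hlt hWpos
          calc (P - φ / N) * W < (α * ‖β‖) ^ 2 / W ^ 2 * W * W := this
            _ = (α * ‖β‖) ^ 2 := by field_simp
        rw [hsdef]; linarith [h5]
    have hsqrt : Real.sqrt s < α * ‖β‖ := (Real.sqrt_lt' hαβpos).mpr hskey
    have habsβpos : 0 < ‖β‖ := norm_pos_iff.mpr hβne
    have habsβCne : ((‖β‖ : ℝ) : ℂ) ≠ 0 := by exact_mod_cast habsβpos.ne'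
    set γB : ℂ := -((starRingEnd ℂ) β / ((‖β‖ : ℝ) : ℂ))
        * ((Real.sqrt s / W : ℝ) : ℂ) with hγBdef
    have hγBW : γB * ((W : ℝ) : ℂ) = -((starRingEnd ℂ) β / ((‖β‖ : ℝ) : ℂ))
        * ((Real.sqrt s : ℝ) : ℂ) := by
      by_cases hW : W = 0
      · have hsW0 : Real.sqrt s = 0 := by rw [hsdef, hW, zero_mul, Real.sqrt_zero]
        rw [hγBdef, hsW0, hW]
        simp
      · have hWCne : ((W : ℝ) : ℂ) ≠ 0 := by exact_mod_cast hW
        rw [hγBdef]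
        push_cast
        field_simp
    have hbvB : ((α : ℝ) : ℂ) * (starRingEnd ℂ) β + γB * ((W : ℝ) : ℂ)
        = ((starRingEnd ℂ) β / ((‖β‖ : ℝ) : ℂ))
          * ((α * ‖β‖ - Real.sqrt s : ℝ) : ℂ) := by
      rw [hγBW]
      push_cast
      field_simp
      ring
    have hvalB : Complex.normSq (((α : ℝ) : ℂ) * (starRingEnd ℂ) β + γB * ((W : ℝ) : ℂ))
        = (α * ‖β‖ - Real.sqrt s) ^ 2 := by
      rw [hbvB, Complex.normSq_mul, Complex.normSq_div, Complex.normSq_conj,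
        Complex.normSq_ofReal, Complex.normSq_ofReal, ← Complex.sq_norm]
      field_simp
    have htrB : Complex.normSq γB * W ≤ P - φ / N := by
      by_cases hW : W = 0
      · rw [hW, mul_zero]; linarith
      · have hWpos : 0 < W := lt_of_le_of_ne hWnn (Ne.symm hW)
        have hnγB : Complex.normSq γB = (Real.sqrt s / W) ^ 2 := by
          rw [hγBdef, Complex.normSq_mul, Complex.normSq_neg, Complex.normSq_div,
            Complex.normSq_conj, Complex.normSq_ofReal, Complex.normSq_ofReal, ← Complex.sq_norm]
          field_simp
        rw [hnγB]
        have : (Real.sqrt s) ^ 2 = s := Real.sq_sqrt hs0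
        rw [div_pow, this, hsdef]
        rw [div_mul_eq_mul_div]
        rw [show W * (P - φ / N) * W = (P - φ / N) * W ^ 2 by ring]
        rw [mul_div_assoc, div_self (by positivity), mul_one]
    refine ⟨Qg γB, hfeas γB htrB, fun Q hQ hcon ht => ?_, rank_vecMulVec_le' _ _⟩
    rw [hQobj, hvalB]
    -- lower bound for arbitrary feasible Q
    set c : ℂ := β / ((N : ℝ) : ℂ) with hcdef
    set z : ℂ := star g₁ ⬝ᵥ Q.mulVec w with hzdef
    set qw : ℝ := (star w ⬝ᵥ Q.mulVec w).re with hqwdef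
    have hqw0 : 0 ≤ qw := re_nonneg_of_psd hQ w
    have hqa : star g₁ ⬝ᵥ Q.mulVec g₁ = ((φ : ℝ) : ℂ) := by
      rw [quadform_real hQ g₁, hcon]
    have hqwC : star w ⬝ᵥ Q.mulVec w = ((qw : ℝ) : ℂ) := quadform_real hQ w
    have hzc : star w ⬝ᵥ Q.mulVec g₁ = (starRingEnd ℂ) z := psd_conj_symm hQ g₁ w
    have hexp : star g₂ ⬝ᵥ Q.mulVec g₂
        = (starRingEnd ℂ) c * c * ((φ : ℝ) : ℂ) + (starRingEnd ℂ) c * z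
          + c * (starRingEnd ℂ) z + ((qw : ℝ) : ℂ) := by
      conv_lhs => rw [hbd]
      simp only [star_add, star_smul, add_dotProduct, smul_dotProduct, mulVec_add, mulVec_smul,
        dotProduct_add, dotProduct_smul, smul_eq_mul, hqa, hqwC, hzc, ← hzdef, ← hcdef,
        Complex.star_def]
      ring
    have hRe : (star g₂ ⬝ᵥ Q.mulVec g₂).re
        = Complex.normSq c * φ + 2 * ((starRingEnd ℂ) c * z).re + qw := by
      rw [hexp]
      have h1 : (starRingEnd ℂ) c * c * ((φ : ℝ) : ℂ) = ((Complex.normSq c * φ : ℝ) : ℂ) := by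
        rw [mul_comm ((starRingEnd ℂ) c) c, Complex.mul_conj]
        push_cast; ring
      have h2 : c * (starRingEnd ℂ) z = (starRingEnd ℂ) ((starRingEnd ℂ) c * z) := by
        rw [_root_.map_mul, Complex.conj_conj]
      rw [h1, h2]
      simp only [Complex.add_re, Complex.ofReal_re, Complex.conj_re]
      ring
    have hcs := psd_cauchy_schwarz hQ g₁ w
    rw [hcon, ← hzdef, ← hqwdef] at hcs
    have habs_z : ‖z‖ ^ 2 ≤ φ * qw := by
      exact hcs
    have hbessel := psd_bessel hQ haw
    rw [← hNdef, ← hWdef, ← hqwdef, hcon] at hbessel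
    have hdivN : φ / N * N = φ := div_mul_cancel₀ φ hNpos.ne'
    have h3 : N * W * Q.trace.re ≤ N * W * P :=
      mul_le_mul_of_nonneg_left ht (by positivity)
    have hqws : qw ≤ s := by
      rw [hsdef]
      have h6 : N * (W * (P - φ / N)) = N * W * P - W * φ := by
        field_simp
      have h7 : N * qw ≤ N * (W * (P - φ / N)) := by linarith [hbessel, h3]
      exact le_of_mul_le_mul_left h7 hNpos
    set X : ℝ := α * ‖β‖ with hXdef
    have habs_c : ‖c‖ = ‖β‖ / N := by
      rw [hcdef, norm_div, Complex.norm_real, Real.norm_eq_abs, abs_of_pos hNpos]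
    have hX : X = ‖c‖ * Real.sqrt φ := by
      rw [hXdef, habs_c, hαdef]; ring
    have hX2 : X ^ 2 = Complex.normSq c * φ := by
      rw [hX, mul_pow, ← Complex.sq_norm, Real.sq_sqrt hφ0]
    have hzb : ‖z‖ ≤ Real.sqrt φ * Real.sqrt qw := by
      rw [← Real.sqrt_mul hφ0]
      rw [show ‖z‖ = Real.sqrt (‖z‖ ^ 2) by
        rw [Real.sqrt_sq (norm_nonneg z)]]
      exact Real.sqrt_le_sqrt habs_z
    have hcross : -(X * Real.sqrt qw) ≤ ((starRingEnd ℂ) c * z).re := by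
      have h4 : -‖(starRingEnd ℂ) c * z‖ ≤ ((starRingEnd ℂ) c * z).re :=
        (abs_le.mp (Complex.abs_re_le_norm _)).1
      have h5 : ‖(starRingEnd ℂ) c * z‖ ≤ X * Real.sqrt qw := by
        rw [norm_mul, Complex.norm_conj, hX]
        calc ‖c‖ * ‖z‖
            ≤ ‖c‖ * (Real.sqrt φ * Real.sqrt qw) :=
              mul_le_mul_of_nonneg_left hzb (norm_nonneg c)
          _ = ‖c‖ * Real.sqrt φ * Real.sqrt qw := by ring
      linarith
    have hy0 : 0 ≤ Real.sqrt qw := Real.sqrt_nonneg _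
    have hyq : Real.sqrt qw ^ 2 = qw := Real.sq_sqrt hqw0
    have hyt : Real.sqrt qw ≤ Real.sqrt s := Real.sqrt_le_sqrt hqws
    have htX : Real.sqrt s ≤ X := hsqrt.le
    rw [hRe]
    calc (X - Real.sqrt s) ^ 2
        ≤ X ^ 2 + 2 * ((starRingEnd ℂ) c * z).re + Real.sqrt qw ^ 2 :=
          lower_bound_helper hy0 hyt htX hcross
      _ = Complex.normSq c * φ + 2 * ((starRingEnd ℂ) c * z).re + qw := by
          rw [hX2, hyq]
end

section
/- Let c₁, c₂ ∈ ℂ, let P > 0, and let φ be a real number with P·|c₂|² < φ ≤ P·(|c₁|² + |c₂|²). Set a₀ = |c₁|² + |c₂|² and κ* = (|c₁|·√φ − |c₂|·√(a₀·P − φ))/a₀. Then κ* ≥ 0, and (κ*)² is the least element of the set S = { |α|² : α, β ∈ ℂ, |α·c₁ + β·c₂|² = φ, |α|² + |β|² ≤ P }; it is attained at α* = κ*·e^{−i·arg(c₁)} and β* = √(P − (κ*)²)·e^{−i·arg(c₂)}. (This is the second case of Theorem 1 of the paper: when the required jamming power at receiver 1 exceeds what zero-forcing jamming can deliver, the full power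 budget must be used and the minimal leakage toward receiver 2 is (κ*)².) -/
set_option maxHeartbeats 1000000

lemma rot_mul (r : ℝ) (z : ℂ) :
    (r : ℂ) * Complex.exp (-(z.arg : ℂ) * Complex.I) * z
      = ((r * ‖z‖ : ℝ) : ℂ) := by
  have h : z * Complex.exp (-(z.arg : ℂ) * Complex.I) = (‖z‖ : ℂ) := by
    nth_rewrite 1 [← Complex.norm_mul_exp_arg_mul_I z]
    rw [mul_assoc, ← Complex.exp_add, neg_mul, add_neg_cancel, Complex.exp_zero, mul_one]
  calc (r : ℂ) * Complex.exp (-(z.arg : ℂ) * Complex.I) * z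
      = (r : ℂ) * (z * Complex.exp (-(z.arg : ℂ) * Complex.I)) := by ring
    _ = (r : ℂ) * (‖z‖ : ℂ) := by rw [h]
    _ = ((r * ‖z‖ : ℝ) : ℂ) := by push_cast; ring

lemma abs_rot (r : ℝ) (θ : ℝ) :
    ‖(r : ℂ) * Complex.exp (-(θ : ℂ) * Complex.I)‖ = |r| := by
  rw [norm_mul, Complex.norm_exp]
  simp


lemma aux_lb (A B s t u v a₀ : ℝ) (ha₀ : a₀ = A ^ 2 + B ^ 2)
    (hA : 0 < A) (hB0 : 0 ≤ B) (hs0 : 0 ≤ s) (ht0 : 0 ≤ t)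
    (hu0 : 0 ≤ u) (hv0 : 0 ≤ v)
    (hbt : B * t < A * s)
    (htri : s ≤ u * A + v * B)
    (hpow : a₀ * (u ^ 2 + v ^ 2) ≤ s ^ 2 + t ^ 2) :
    A * s - B * t ≤ a₀ * u := by
  subst ha₀
  by_contra hc
  push_neg at hc
  have huA : u * A < s := by
    nlinarith [mul_nonneg (mul_nonneg hB0 hB0) hs0,
      mul_nonneg (mul_nonneg hA.le hB0) ht0]
  have hvB : s - u * A ≤ v * B := by linarith
  have hsq : (s - u * A) ^ 2 ≤ (v * B) ^ 2 := by
    have h0 : 0 ≤ s - u * A := by linarith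
    nlinarith
  have hchain : (A ^ 2 + B ^ 2) * (s - u * A) ^ 2 ≤
      (s ^ 2 + t ^ 2) * B ^ 2 - (A ^ 2 + B ^ 2) * u ^ 2 * B ^ 2 := by
    have h1 : (A ^ 2 + B ^ 2) * (s - u * A) ^ 2 ≤ (A ^ 2 + B ^ 2) * (v * B) ^ 2 := by
      have := sq_nonneg A; have := sq_nonneg B
      nlinarith
    have h2 : (A ^ 2 + B ^ 2) * v ^ 2 * B ^ 2 ≤
        (s ^ 2 + t ^ 2 - (A ^ 2 + B ^ 2) * u ^ 2) * B ^ 2 := by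
      have h3 : (A ^ 2 + B ^ 2) * v ^ 2 ≤ s ^ 2 + t ^ 2 - (A ^ 2 + B ^ 2) * u ^ 2 := by
        nlinarith
      nlinarith [sq_nonneg B]
    nlinarith
  have hm1 : 0 < A * s - B * t - (A ^ 2 + B ^ 2) * u := by linarith
  have hm2 : 0 < A * s + B * t - (A ^ 2 + B ^ 2) * u := by
    nlinarith [mul_nonneg hB0 ht0]
  nlinarith [mul_pos hm1 hm2, hchain]

/-- Second case of Theorem 1 of the paper: when P·|c₂|² < φ ≤ P·(|c₁|²+|c₂|²), the minimum
of |α|² over the feasible set is (κ*)², attained with full power. -/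
theorem stmt5 (c₁ c₂ : ℂ) (P φ : ℝ) (hP : 0 < P)
    (hφl : P * ‖c₂‖ ^ 2 < φ)
    (hφu : φ ≤ P * (‖c₁‖ ^ 2 + ‖c₂‖ ^ 2)) :
    let a₀ : ℝ := ‖c₁‖ ^ 2 + ‖c₂‖ ^ 2
    let κ : ℝ := (‖c₁‖ * Real.sqrt φ -
      ‖c₂‖ * Real.sqrt (a₀ * P - φ)) / a₀
    let α : ℂ := (κ : ℂ) * Complex.exp (-(c₁.arg : ℂ) * Complex.I)
    let β : ℂ := ((Real.sqrt (P - κ ^ 2) : ℝ) : ℂ) * Complex.exp (-(c₂.arg : ℂ) * Complex.I)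
    0 ≤ κ ∧
    IsLeast {x : ℝ | ∃ α' β' : ℂ,
        ‖α' * c₁ + β' * c₂‖ ^ 2 = φ ∧
        ‖α'‖ ^ 2 + ‖β'‖ ^ 2 ≤ P ∧
        x = ‖α'‖ ^ 2} (κ ^ 2) ∧
    ‖α * c₁ + β * c₂‖ ^ 2 = φ ∧
    ‖α‖ ^ 2 + ‖β‖ ^ 2 ≤ P ∧
    ‖α‖ ^ 2 = κ ^ 2 := by
  intro a₀ κ α β
  have ha₀eq' : a₀ = ‖c₁‖ ^ 2 + ‖c₂‖ ^ 2 := rfl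
  have hκeq' : κ = (‖c₁‖ * Real.sqrt φ -
      ‖c₂‖ * Real.sqrt (a₀ * P - φ)) / a₀ := rfl
  have hαdef : α = (κ : ℂ) * Complex.exp (-(c₁.arg : ℂ) * Complex.I) := rfl
  have hβdef : β = ((Real.sqrt (P - κ ^ 2) : ℝ) : ℂ) *
      Complex.exp (-(c₂.arg : ℂ) * Complex.I) := rfl
  clear_value a₀ κ α β
  set A := ‖c₁‖ with hAdef
  set B := ‖c₂‖ with hBdef
  have hA0 : 0 ≤ A := norm_nonneg _
  have hB0 : 0 ≤ B := norm_nonneg _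
  have hφ0 : 0 < φ := lt_of_le_of_lt (by positivity) hφl
  have hApos : 0 < A := by
    rcases hA0.lt_or_eq with h | h
    · exact h
    · exfalso; rw [← h] at hφu; simp at hφu; linarith
  have ha₀eq : a₀ = A ^ 2 + B ^ 2 := ha₀eq'
  have ha₀ : 0 < a₀ := by rw [ha₀eq]; positivity
  have hφu' : φ ≤ a₀ * P := by rw [ha₀eq]; linarith
  set s := Real.sqrt φ with hsdef
  set t := Real.sqrt (a₀ * P - φ) with htdef
  have hs0 : 0 ≤ s := Real.sqrt_nonneg _
  have ht0 : 0 ≤ t := Real.sqrt_nonneg _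
  have hs2 : s ^ 2 = φ := Real.sq_sqrt hφ0.le
  have ht2 : t ^ 2 = a₀ * P - φ := Real.sq_sqrt (by linarith)
  have hκeq : κ = (A * s - B * t) / a₀ := hκeq'
  have key : (B * t) ^ 2 < (A * s) ^ 2 := by
    have hid : (A * s) ^ 2 - (B * t) ^ 2 = a₀ * (φ - P * B ^ 2) := by
      rw [ha₀eq] at ht2 ⊢
      linear_combination A ^ 2 * hs2 - B ^ 2 * ht2
    have hpos : 0 < a₀ * (φ - P * B ^ 2) :=
      mul_pos ha₀ (by linarith)
    linarith
  have hAsBt : B * t < A * s :=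
    lt_of_pow_lt_pow_left₀ 2 (mul_nonneg hA0 hs0) key
  have hκ0 : 0 ≤ κ := by rw [hκeq]; exact div_nonneg (by linarith) ha₀.le
  -- P - κ² = ((A*t + B*s)/a₀)²
  have hst : s ^ 2 + t ^ 2 = a₀ * P := by linarith
  have hκa : κ * a₀ = A * s - B * t := by
    rw [hκeq]; field_simp
  have h2 : (A * t + B * s) ^ 2 + (κ * a₀) ^ 2 = a₀ ^ 2 * P := by
    rw [hκa, ha₀eq]; rw [ha₀eq] at hst; linear_combination (A ^ 2 + B ^ 2) * hst
  have hPκ : P - κ ^ 2 = ((A * t + B * s) / a₀) ^ 2 := by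
    rw [div_pow, eq_div_iff (by positivity)]
    linear_combination -h2
  have hPκ0 : 0 ≤ P - κ ^ 2 := by rw [hPκ]; positivity
  have hsqrtPκ : Real.sqrt (P - κ ^ 2) = (A * t + B * s) / a₀ := by
    rw [hPκ]; exact Real.sqrt_sq (by positivity)
  -- value at the optimal point
  have hαc : α * c₁ = ((κ * A : ℝ) : ℂ) := by rw [hαdef]; exact rot_mul κ c₁
  have hβc : β * c₂ = ((Real.sqrt (P - κ ^ 2) * B : ℝ) : ℂ) := by
    rw [hβdef]; exact rot_mul _ c₂
  have hsum : κ * A + Real.sqrt (P - κ ^ 2) * B = s := by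
    rw [hsqrtPκ, hκeq]
    field_simp
    rw [ha₀eq]; ring
  have hval : ‖α * c₁ + β * c₂‖ ^ 2 = φ := by
    rw [hαc, hβc, ← Complex.ofReal_add, Complex.norm_real, Real.norm_eq_abs, hsum, abs_of_nonneg hs0, hs2]
  have hαabs : ‖α‖ ^ 2 = κ ^ 2 := by
    rw [hαdef, abs_rot, sq_abs]
  have hβabs : ‖β‖ ^ 2 = P - κ ^ 2 := by
    rw [hβdef, abs_rot, sq_abs]
    exact Real.sq_sqrt hPκ0
  have hpow : ‖α‖ ^ 2 + ‖β‖ ^ 2 ≤ P := by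
    rw [hαabs, hβabs]; linarith
  refine ⟨hκ0, ⟨⟨α, β, hval, hpow, hαabs.symm⟩, ?_⟩, hval, hpow, hαabs⟩
  rintro x ⟨α', β', hfeas, hp, rfl⟩
  set u := ‖α'‖ with hu
  set v := ‖β'‖ with hv
  have hu0 : 0 ≤ u := norm_nonneg _
  have hv0 : 0 ≤ v := norm_nonneg _
  have htri : s ≤ u * A + v * B := by
    have h1 : ‖α' * c₁ + β' * c₂‖ ≤ u * A + v * B := by
      calc ‖α' * c₁ + β' * c₂‖
          ≤ ‖α' * c₁‖ + ‖β' * c₂‖ := norm_add_le _ _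
        _ = u * A + v * B := by rw [norm_mul, norm_mul]
    have h2 : s = ‖α' * c₁ + β' * c₂‖ := by
      rw [hsdef, ← hfeas, Real.sqrt_sq (norm_nonneg _)]
    linarith [h2 ▸ h1]
  -- now show κ ≤ u
  have hpow' : a₀ * (u ^ 2 + v ^ 2) ≤ s ^ 2 + t ^ 2 := by
    have h3 := mul_le_mul_of_nonneg_left hp ha₀.le
    linarith
  have hκu : κ ≤ u := by
    rw [hκeq, div_le_iff₀ ha₀]
    have := aux_lb A B s t u v a₀ ha₀eq hApos hB0 hs0 ht0 hu0 hv0 hAsBt htri hpow'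
    linarith
  exact pow_le_pow_left₀ hκ0 hκu 2
end

section
/- Let n ≥ 1, let g₁, g₂ ∈ ℂⁿ be linearly independent, and let a₁, a₂, c₁, c₂, P_max > 0. With b₂ = |g₁ᴴĝ₂⊥|, define R₁^ZF2 = log₂(1 + a₁/(P_max·b₂² + c₁)) and R₁^max = log₂(1 + a₁/c₁). Then for every real R₁ with R₁^ZF2 ≤ R₁ ≤ R₁^max, the set { R₂^S(Q) : Q ∈ Ω, R₁^S(Q) = R₁ } has greatest element f_max(R₁) = log₂(1 + a₂/c₂). (This is the first case of Theorem 2 of the paper: for R₁ at least the zero-forcing rate R₁^ZF2, driving link 1's rate down to R₁ costs nothing at receiver 2, so the maximal rate of link 2 is unreduced.) -/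
open Matrix
open scoped ComplexOrder

lemma dot_self_coe {n : ℕ} (v : Fin n → ℂ) :
    star v ⬝ᵥ v = (((star v ⬝ᵥ v).re : ℝ) : ℂ) := by
  have h := dotProduct_star_self_nonneg v
  rw [Complex.nonneg_iff] at h
  exact Complex.ext rfl (by simp [← h.2])

lemma dot_self_re_nonneg {n : ℕ} (v : Fin n → ℂ) : 0 ≤ (star v ⬝ᵥ v).re :=
  ((Complex.nonneg_iff).mp (dotProduct_star_self_nonneg v)).1

lemma dot_self_re_pos {n : ℕ} {v : Fin n → ℂ} (hv : v ≠ 0) : 0 < (star v ⬝ᵥ v).re := by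
  rcases (dot_self_re_nonneg v).lt_or_eq with h | h
  · exact h
  · exfalso; apply hv
    rw [← dotProduct_star_self_eq_zero (v := v), dot_self_coe, ← h]
    simp

lemma real_smul_fun {n : ℕ} (r : ℝ) (v : Fin n → ℂ) : r • v = ((r : ℂ)) • v := by
  funext i; simp [Complex.real_smul]

lemma mulVec_vecMulVec {n : ℕ} (v u : Fin n → ℂ) :
    (vecMulVec v (star v)) *ᵥ u = (star v ⬝ᵥ u) • v := by
  funext i
  simp [vecMulVec, mulVec, dotProduct, Finset.mul_sum, mul_comm, mul_left_comm, mul_assoc]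

lemma normalized_dot {n : ℕ} {v : Fin n → ℂ} (hv : v ≠ 0) :
    star ((((Real.sqrt ((star v ⬝ᵥ v).re))⁻¹ : ℝ)) • v) ⬝ᵥ
      ((((Real.sqrt ((star v ⬝ᵥ v).re))⁻¹ : ℝ)) • v) = 1 := by
  have hp := dot_self_re_pos hv
  set r := (star v ⬝ᵥ v).re with hr
  rw [real_smul_fun, star_smul, smul_dotProduct, dotProduct_smul, dot_self_coe v, ← hr,
    smul_eq_mul, smul_eq_mul]
  simp only [Complex.star_def, Complex.conj_ofReal]
  norm_cast
  have hs : Real.sqrt r ≠ 0 := (Real.sqrt_pos.mpr hp).ne'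
  field_simp
  rw [Real.sq_sqrt hp.le]


/-- First case of Theorem 2 of the paper: for R₁ between the zero-forcing rate R₁^ZF2 and
R₁^max, the greatest achievable rate of suspicious link 2 given R₁^S(Q) = R₁ is the
unjammed rate log₂(1 + a₂/c₂). -/
theorem stmt6 (n : ℕ) (hn : 1 ≤ n) (g₁ g₂ : Fin n → ℂ)
    (hli : LinearIndependent ℂ ![g₁, g₂])
    (a₁ a₂ c₁ c₂ Pmax : ℝ)
    (ha₁ : 0 < a₁) (ha₂ : 0 < a₂) (hc₁ : 0 < c₁) (hc₂ : 0 < c₂) (hPmax : 0 < Pmax)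
    (gh2 gperp ghperp : Fin n → ℂ)
    (hgh2 : gh2 = (Real.sqrt ((star g₂ ⬝ᵥ g₂).re))⁻¹ • g₂)
    (hgperp : gperp = g₁ - (star gh2 ⬝ᵥ g₁) • gh2)
    (hghperp : ghperp = (Real.sqrt ((star gperp ⬝ᵥ gperp).re))⁻¹ • gperp)
    (b₂ : ℝ) (hb₂ : b₂ = ‖star g₁ ⬝ᵥ ghperp‖)
    (R₁ : ℝ)
    (hR₁l : Real.logb 2 (1 + a₁ / (Pmax * b₂ ^ 2 + c₁)) ≤ R₁)
    (hR₁u : R₁ ≤ Real.logb 2 (1 + a₁ / c₁)) :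
    IsGreatest
      {r : ℝ | ∃ Q : Matrix (Fin n) (Fin n) ℂ, Q.PosSemidef ∧ Q.trace.re ≤ Pmax ∧
        Real.logb 2 (1 + a₁ / ((star g₁ ⬝ᵥ Q.mulVec g₁).re + c₁)) = R₁ ∧
        r = Real.logb 2 (1 + a₂ / ((star g₂ ⬝ᵥ Q.mulVec g₂).re + c₂))}
      (Real.logb 2 (1 + a₂ / c₂)) := by
  -- linear independence facts
  obtain ⟨hg₂ne, hnotg₁⟩ := linearIndependent_fin2.mp (by simpa using hli)
  simp only [Matrix.cons_val_one, Matrix.head_cons, Matrix.cons_val_zero] at hg₂ne hnotg₁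
  set n2 : ℝ := (star g₂ ⬝ᵥ g₂).re with hn2def
  have hn2 : 0 < n2 := dot_self_re_pos hg₂ne
  have hs2 : (0:ℝ) < Real.sqrt n2 := Real.sqrt_pos.mpr hn2
  have hgh2n : star gh2 ⬝ᵥ gh2 = 1 := by
    rw [hgh2]; exact normalized_dot hg₂ne
  -- orthogonality
  have hperp2 : star gh2 ⬝ᵥ gperp = 0 := by
    rw [hgperp]
    rw [dotProduct_sub, dotProduct_smul, hgh2n]
    simp
  have hgperpne : gperp ≠ 0 := by
    intro h0
    have hg1 : g₁ = (star gh2 ⬝ᵥ g₁) • gh2 := by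
      have := hgperp.symm.trans h0
      rwa [sub_eq_zero] at this
    have hg1' : g₁ = ((star gh2 ⬝ᵥ g₁) * ((Real.sqrt n2)⁻¹ : ℂ)) • g₂ := by
      conv_lhs => rw [hg1]
      rw [hgh2, real_smul_fun, smul_smul]
      norm_cast
    exact hnotg₁ _ hg1'.symm
  set np : ℝ := (star gperp ⬝ᵥ gperp).re with hnpdef
  have hnp : 0 < np := dot_self_re_pos hgperpne
  have hsp : (0:ℝ) < Real.sqrt np := Real.sqrt_pos.mpr hnp
  have hg2eq : g₂ = ((Real.sqrt n2 : ℝ):ℂ) • gh2 := by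
    rw [hgh2, real_smul_fun, smul_smul]
    rw [mul_comm]
    norm_cast
    rw [inv_mul_cancel₀ hs2.ne']
    simp
  have hg2perp : star g₂ ⬝ᵥ gperp = 0 := by
    rw [hg2eq, star_smul, smul_dotProduct, hperp2, smul_zero]
  have hg2ghperp : star g₂ ⬝ᵥ ghperp = 0 := by
    rw [hghperp, real_smul_fun, dotProduct_smul, hg2perp, smul_zero]
  have hgperpg1 : star gperp ⬝ᵥ g₁ = ((np:ℝ) : ℂ) := by
    have hg1 : g₁ = gperp + (star gh2 ⬝ᵥ g₁) • gh2 := by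
      rw [hgperp]; abel
    calc star gperp ⬝ᵥ g₁
        = star gperp ⬝ᵥ (gperp + (star gh2 ⬝ᵥ g₁) • gh2) := by rw [← hg1]
      _ = star gperp ⬝ᵥ gperp + (star gh2 ⬝ᵥ g₁) * (star gperp ⬝ᵥ gh2) := by
          rw [dotProduct_add, dotProduct_smul]; rfl
      _ = ((np:ℝ):ℂ) := by
          rw [star_dotProduct gperp gh2, hperp2, dot_self_coe]
          simp
          exact hnpdef.symm
  have hghperpg1 : star ghperp ⬝ᵥ g₁ = ((Real.sqrt np : ℝ) : ℂ) := by
    rw [hghperp, real_smul_fun, star_smul, smul_dotProduct, hgperpg1]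
    simp only [Complex.star_def, Complex.conj_ofReal, smul_eq_mul]
    norm_cast
    rw [← Real.sqrt_mul_self hnp.le]
    field_simp
    rw [Real.sq_sqrt (Real.sqrt_nonneg _)]
  have hb2 : b₂ = Real.sqrt np := by
    rw [hb₂, star_dotProduct g₁ ghperp, hghperpg1]
    simp [Real.sqrt_nonneg]
  have hb2sq : b₂ ^ 2 = np := by rw [hb2, Real.sq_sqrt hnp.le]
  -- numeric part
  have h2 : (1:ℝ) < 2 := one_lt_two
  have hden1 : (0:ℝ) < Pmax * b₂ ^ 2 + c₁ := by
    have : (0:ℝ) < Pmax * b₂ ^ 2 := by rw [hb2sq]; positivity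
    linarith
  have harg1 : (0:ℝ) < 1 + a₁ / (Pmax * b₂ ^ 2 + c₁) := by positivity
  have hEl : 1 + a₁ / (Pmax * b₂ ^ 2 + c₁) ≤ (2:ℝ) ^ R₁ :=
    (Real.logb_le_iff_le_rpow h2 harg1).mp hR₁l
  have hEu : (2:ℝ) ^ R₁ ≤ 1 + a₁ / c₁ :=
    (Real.le_logb_iff_rpow_le h2 (by positivity)).mp hR₁u
  set E : ℝ := (2:ℝ) ^ R₁ with hEdef
  have hE1 : 1 < E := by have := div_pos ha₁ hden1; linarith
  have hE1' : 0 < E - 1 := sub_pos.mpr hE1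
  set x : ℝ := a₁ / (E - 1) - c₁ with hxdef
  have hx0 : 0 ≤ x := by
    have h1 : E - 1 ≤ a₁ / c₁ := by linarith
    have h2' : (E - 1) * c₁ ≤ a₁ := by
      rw [← le_div_iff₀ hc₁]; exact h1
    have h3 : c₁ ≤ a₁ / (E - 1) := by
      rw [le_div_iff₀ hE1']; linarith [h2']
    rw [hxdef]; linarith
  have hxP : x ≤ Pmax * np := by
    have h1 : a₁ / (Pmax * b₂ ^ 2 + c₁) ≤ E - 1 := by linarith
    have h2' : a₁ ≤ (E - 1) * (Pmax * b₂ ^ 2 + c₁) := by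
      rw [div_le_iff₀ hden1] at h1; linarith
    have : a₁ / (E - 1) ≤ Pmax * b₂ ^ 2 + c₁ := by
      rw [div_le_iff₀ hE1']; linarith
    rw [hb2sq] at this; rw [hxdef]; linarith
  set t : ℝ := x / np with htdef
  have ht0 : 0 ≤ t := div_nonneg hx0 hnp.le
  have htP : t ≤ Pmax := by
    rw [htdef, div_le_iff₀ hnp]; linarith [hxP]
  have htnp : t * np = x := div_mul_cancel₀ x hnp.ne'
  set Q : Matrix (Fin n) (Fin n) ℂ := ((t:ℝ):ℂ) • vecMulVec ghperp (star ghperp) with hQdef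
  have hghn : star ghperp ⬝ᵥ ghperp = 1 := by
    rw [hghperp]; exact normalized_dot hgperpne
  -- quadratic form of Q
  have hquad : ∀ u : Fin n → ℂ, star u ⬝ᵥ Q *ᵥ u
      = ((t * Complex.normSq (star ghperp ⬝ᵥ u) : ℝ) : ℂ) := by
    intro u
    rw [hQdef, smul_mulVec, mulVec_vecMulVec, dotProduct_smul, dotProduct_smul,
      star_dotProduct u ghperp]
    simp only [smul_eq_mul, star_star, Complex.star_def]
    rw [Complex.mul_conj]
    push_cast
    ring
  -- Q is positive semidefinite
  have hQpsd : Q.PosSemidef := by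
    rw [posSemidef_iff_dotProduct_mulVec]
    constructor
    · rw [hQdef]
      ext i j
      simp only [Matrix.conjTranspose_apply, Matrix.smul_apply, vecMulVec_apply,
        smul_eq_mul, Pi.star_apply, Complex.star_def, _root_.map_mul, Complex.conj_ofReal,
        Complex.conj_conj]
      ring
    · intro u
      rw [hquad u, Complex.zero_le_real]
      exact mul_nonneg ht0 (Complex.normSq_nonneg _)
  have htrace : Q.trace = ((t:ℝ):ℂ) := by
    rw [hQdef, trace_smul]
    have hvv : (vecMulVec ghperp (star ghperp)).trace = ghperp ⬝ᵥ star ghperp := by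
      simp [Matrix.trace, Matrix.diag, vecMulVec_apply, dotProduct]
    rw [hvv, dotProduct_comm, hghn]
    simp
  have hr1 : (star g₁ ⬝ᵥ Q *ᵥ g₁).re = x := by
    rw [hquad g₁, hghperpg1]
    simp only [Complex.ofReal_re, Complex.normSq_ofReal]
    rw [Real.mul_self_sqrt hnp.le, htnp]
  have hr2 : (star g₂ ⬝ᵥ Q *ᵥ g₂).re = 0 := by
    rw [hquad g₂]
    have : star ghperp ⬝ᵥ g₂ = 0 := by
      rw [star_dotProduct ghperp g₂, hg2ghperp, star_zero]
    rw [this]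
    simp
  constructor
  · refine ⟨Q, hQpsd, ?_, ?_, ?_⟩
    · rw [htrace]; simpa using htP
    · rw [hr1]
      have hxc : x + c₁ = a₁ / (E - 1) := by rw [hxdef]; ring
      rw [hxc]
      have hfrac : 1 + a₁ / (a₁ / (E - 1)) = E := by
        rw [div_div_eq_mul_div, mul_comm, mul_div_assoc, div_self ha₁.ne', mul_one]
        ring
      rw [hfrac, hEdef]
      exact Real.logb_rpow (by norm_num) (by norm_num)
    · rw [hr2]
      norm_num
  · rintro r ⟨M, hM, -, -, rfl⟩
    have h0 : 0 ≤ (star g₂ ⬝ᵥ M *ᵥ g₂).re := (Complex.nonneg_iff.mp (hM.dotProduct_mulVec_nonneg g₂)).1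
    have hle : 1 + a₂ / ((star g₂ ⬝ᵥ M *ᵥ g₂).re + c₂) ≤ 1 + a₂ / c₂ := by
      have : a₂ / ((star g₂ ⬝ᵥ M *ᵥ g₂).re + c₂) ≤ a₂ / c₂ :=
        div_le_div_of_nonneg_left ha₂.le hc₂ (by linarith)
      linarith
    exact Real.logb_le_logb_of_le h2 (by positivity) hle
end

section
/- Let a₁, a₂, c₁, c₂, P, G > 0, b₁ > 0 and b₂ ≥ 0 be real numbers. Define φ(R) = a₁/(2^R − 1) − c₁, κ*(R) = (b₁·√(φ(R)) − b₂·√((b₁² + b₂²)·P − φ(R)))/(b₁² + b₂²), and f_max(R) = log₂(1 + a₂/(κ*(R)²·G + c₂)). Define R₁^min = log₂(1 + a₁/(P·(b₁² + b₂²) + c₁)) and R₁^ZF2 = log₂(1 + a₁/(P·b₂² + c₁)). Then f_max is strictly increasing on the interval [R₁^min, R₁^ZF2). (This is Proposition 1 of the paper: the upper boundary curve of the achievable rate region for the two suspicious links is an increasing function of R₁ below the zero-forcing rate R₁^ZF2.) -/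
private lemma stmt8_aux (a₂ c₂ P G b₁ b₂ p q : ℝ)
    (ha₂ : 0 < a₂) (hc₂ : 0 < c₂) (hP : 0 < P) (hG : 0 < G)
    (hb₁ : 0 < b₁) (hb₂ : 0 ≤ b₂)
    (hq0 : P * b₂ ^ 2 < q) (hqp : q < p) (hpB : p ≤ P * (b₁ ^ 2 + b₂ ^ 2)) :
    Real.logb 2 (1 + a₂ /
        (((b₁ * Real.sqrt p - b₂ * Real.sqrt ((b₁ ^ 2 + b₂ ^ 2) * P - p)) /
          (b₁ ^ 2 + b₂ ^ 2)) ^ 2 * G + c₂)) <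
    Real.logb 2 (1 + a₂ /
        (((b₁ * Real.sqrt q - b₂ * Real.sqrt ((b₁ ^ 2 + b₂ ^ 2) * P - q)) /
          (b₁ ^ 2 + b₂ ^ 2)) ^ 2 * G + c₂)) := by
  have hB : 0 < b₁ ^ 2 + b₂ ^ 2 := by positivity
  have hqpos : 0 < q := lt_of_le_of_lt (by positivity) hq0
  have hppos : 0 < p := hqpos.trans hqp
  have hBPp : 0 ≤ (b₁ ^ 2 + b₂ ^ 2) * P - p := by nlinarith
  have hBPq : 0 ≤ (b₁ ^ 2 + b₂ ^ 2) * P - q := by nlinarith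
  have hsqq := Real.sq_sqrt hqpos.le
  have hsqq' := Real.sq_sqrt hBPq
  have hsq := Real.sqrt_nonneg q
  have hsq' := Real.sqrt_nonneg ((b₁ ^ 2 + b₂ ^ 2) * P - q)
  -- κ(q) > 0
  have hnum : b₂ * Real.sqrt ((b₁ ^ 2 + b₂ ^ 2) * P - q) < b₁ * Real.sqrt q := by
    have hsqlt : (b₂ * Real.sqrt ((b₁ ^ 2 + b₂ ^ 2) * P - q)) ^ 2 <
        (b₁ * Real.sqrt q) ^ 2 := by
      rw [mul_pow, mul_pow, hsqq, hsqq']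
      nlinarith
    exact lt_of_pow_lt_pow_left₀ 2 (by positivity) hsqlt
  have hκq : 0 < (b₁ * Real.sqrt q - b₂ * Real.sqrt ((b₁ ^ 2 + b₂ ^ 2) * P - q)) /
      (b₁ ^ 2 + b₂ ^ 2) := div_pos (by linarith) hB
  -- κ(q) < κ(p)
  have hκlt : (b₁ * Real.sqrt q - b₂ * Real.sqrt ((b₁ ^ 2 + b₂ ^ 2) * P - q)) /
        (b₁ ^ 2 + b₂ ^ 2) <
      (b₁ * Real.sqrt p - b₂ * Real.sqrt ((b₁ ^ 2 + b₂ ^ 2) * P - p)) /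
        (b₁ ^ 2 + b₂ ^ 2) := by
    have h1 : b₁ * Real.sqrt q < b₁ * Real.sqrt p := by
      have := Real.sqrt_lt_sqrt hqpos.le hqp
      nlinarith
    have h2 : b₂ * Real.sqrt ((b₁ ^ 2 + b₂ ^ 2) * P - p) ≤
        b₂ * Real.sqrt ((b₁ ^ 2 + b₂ ^ 2) * P - q) := by
      have := Real.sqrt_le_sqrt (by linarith :
        (b₁ ^ 2 + b₂ ^ 2) * P - p ≤ (b₁ ^ 2 + b₂ ^ 2) * P - q)
      nlinarith [Real.sqrt_nonneg ((b₁ ^ 2 + b₂ ^ 2) * P - p)]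
    exact div_lt_div_of_pos_right (by linarith) hB
  have hκsq : ((b₁ * Real.sqrt q - b₂ * Real.sqrt ((b₁ ^ 2 + b₂ ^ 2) * P - q)) /
        (b₁ ^ 2 + b₂ ^ 2)) ^ 2 <
      ((b₁ * Real.sqrt p - b₂ * Real.sqrt ((b₁ ^ 2 + b₂ ^ 2) * P - p)) /
        (b₁ ^ 2 + b₂ ^ 2)) ^ 2 := pow_lt_pow_left₀ hκlt hκq.le two_ne_zero
  have hdenq : 0 < ((b₁ * Real.sqrt q - b₂ * Real.sqrt ((b₁ ^ 2 + b₂ ^ 2) * P - q)) /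
      (b₁ ^ 2 + b₂ ^ 2)) ^ 2 * G + c₂ := by positivity
  have hdiv : a₂ / (((b₁ * Real.sqrt p - b₂ * Real.sqrt ((b₁ ^ 2 + b₂ ^ 2) * P - p)) /
        (b₁ ^ 2 + b₂ ^ 2)) ^ 2 * G + c₂) <
      a₂ / (((b₁ * Real.sqrt q - b₂ * Real.sqrt ((b₁ ^ 2 + b₂ ^ 2) * P - q)) /
        (b₁ ^ 2 + b₂ ^ 2)) ^ 2 * G + c₂) := by
    apply div_lt_div_of_pos_left ha₂ hdenq
    have := mul_lt_mul_of_pos_right hκsq hG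
    linarith
  have harg : (0:ℝ) < 1 + a₂ /
      (((b₁ * Real.sqrt p - b₂ * Real.sqrt ((b₁ ^ 2 + b₂ ^ 2) * P - p)) /
        (b₁ ^ 2 + b₂ ^ 2)) ^ 2 * G + c₂) := by positivity
  exact Real.logb_lt_logb (by norm_num) harg (by linarith)

/-- Proposition 1 of the paper: the upper boundary curve f_max of the achievable rate
region for the two suspicious links is strictly increasing on [R₁^min, R₁^ZF2). -/
theorem stmt8 (a₁ a₂ c₁ c₂ P G b₁ b₂ : ℝ)
    (ha₁ : 0 < a₁) (ha₂ : 0 < a₂) (hc₁ : 0 < c₁) (hc₂ : 0 < c₂)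
    (hP : 0 < P) (hG : 0 < G) (hb₁ : 0 < b₁) (hb₂ : 0 ≤ b₂) :
    StrictMonoOn
      (fun R : ℝ => Real.logb 2 (1 + a₂ /
        (((b₁ * Real.sqrt (a₁ / ((2 : ℝ) ^ R - 1) - c₁) -
            b₂ * Real.sqrt ((b₁ ^ 2 + b₂ ^ 2) * P - (a₁ / ((2 : ℝ) ^ R - 1) - c₁))) /
          (b₁ ^ 2 + b₂ ^ 2)) ^ 2 * G + c₂)))
      (Set.Ico (Real.logb 2 (1 + a₁ / (P * (b₁ ^ 2 + b₂ ^ 2) + c₁)))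
        (Real.logb 2 (1 + a₁ / (P * b₂ ^ 2 + c₁)))) := by
  have hB : 0 < b₁ ^ 2 + b₂ ^ 2 := by positivity
  have key : ∀ x ∈ Set.Ico (Real.logb 2 (1 + a₁ / (P * (b₁ ^ 2 + b₂ ^ 2) + c₁)))
      (Real.logb 2 (1 + a₁ / (P * b₂ ^ 2 + c₁))),
      0 < (2:ℝ) ^ x - 1 ∧ P * b₂ ^ 2 < a₁ / ((2:ℝ) ^ x - 1) - c₁ ∧
        a₁ / ((2:ℝ) ^ x - 1) - c₁ ≤ P * (b₁ ^ 2 + b₂ ^ 2) := by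
    intro x hx
    obtain ⟨hx1, hx2⟩ := hx
    have hd1 : 0 < P * (b₁ ^ 2 + b₂ ^ 2) + c₁ := by positivity
    have hd2 : 0 < P * b₂ ^ 2 + c₁ := by positivity
    have hy1 : (0:ℝ) < 1 + a₁ / (P * (b₁ ^ 2 + b₂ ^ 2) + c₁) := by positivity
    have hy2 : (0:ℝ) < 1 + a₁ / (P * b₂ ^ 2 + c₁) := by positivity
    have hlow : 1 + a₁ / (P * (b₁ ^ 2 + b₂ ^ 2) + c₁) ≤ (2:ℝ) ^ x := by
      have h := Real.rpow_le_rpow_of_exponent_le (by norm_num : (1:ℝ) ≤ 2) hx1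
      rwa [Real.rpow_logb (by norm_num) (by norm_num) hy1] at h
    have hhigh : (2:ℝ) ^ x < 1 + a₁ / (P * b₂ ^ 2 + c₁) := by
      have h := Real.rpow_lt_rpow_of_exponent_lt (by norm_num : (1:ℝ) < 2) hx2
      rwa [Real.rpow_logb (by norm_num) (by norm_num) hy2] at h
    have ht : 0 < (2:ℝ) ^ x - 1 := by
      have : 0 < a₁ / (P * (b₁ ^ 2 + b₂ ^ 2) + c₁) := by positivity
      linarith
    refine ⟨ht, ?_, ?_⟩
    · have h0 : (2:ℝ) ^ x - 1 < a₁ / (P * b₂ ^ 2 + c₁) := by linarith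
      have h1 : ((2:ℝ) ^ x - 1) * (P * b₂ ^ 2 + c₁) < a₁ := by
        have := (lt_div_iff₀ hd2).mp h0
        linarith
      have : P * b₂ ^ 2 + c₁ < a₁ / ((2:ℝ) ^ x - 1) := by
        rw [lt_div_iff₀ ht]; nlinarith
      linarith
    · have h0 : a₁ / (P * (b₁ ^ 2 + b₂ ^ 2) + c₁) ≤ (2:ℝ) ^ x - 1 := by linarith
      have h1 : a₁ ≤ ((2:ℝ) ^ x - 1) * (P * (b₁ ^ 2 + b₂ ^ 2) + c₁) := by
        have := (div_le_iff₀ hd1).mp h0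
        linarith
      have : a₁ / ((2:ℝ) ^ x - 1) ≤ P * (b₁ ^ 2 + b₂ ^ 2) + c₁ := by
        rw [div_le_iff₀ ht]; nlinarith
      linarith
  intro R hR S hS hRS
  obtain ⟨htR, hloR, hhiR⟩ := key R hR
  obtain ⟨htS, hloS, hhiS⟩ := key S hS
  have hpSR : a₁ / ((2:ℝ) ^ S - 1) - c₁ < a₁ / ((2:ℝ) ^ R - 1) - c₁ := by
    have h2 : (2:ℝ) ^ R < (2:ℝ) ^ S :=
      Real.rpow_lt_rpow_of_exponent_lt (by norm_num : (1:ℝ) < 2) hRS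
    have : a₁ / ((2:ℝ) ^ S - 1) < a₁ / ((2:ℝ) ^ R - 1) :=
      div_lt_div_of_pos_left ha₁ htR (by linarith)
    linarith
  exact stmt8_aux a₂ c₂ P G b₁ b₂ _ _ ha₂ hc₂ hP hG hb₁ hb₂ hloS hpSR hhiR
end

section
/- Let n ≥ 1, let g₁, g₂ ∈ ℂⁿ be linearly independent, and let a₁, a₂, c₁, c₂, P_max > 0. Define ĝ₁ = g₁/‖g₁‖, g₁⊥ = g₂ − (ĝ₁ᴴg₂)ĝ₁, ĝ₁⊥ = g₁⊥/‖g₁⊥‖, B₁ = |g₂ᴴĝ₁|, B₂ = |g₂ᴴĝ₁⊥|, R₁^min = log₂(1 + a₁/(P_max·‖g₁‖² + c₁)) and R₁^max = log₂(1 + a₁/c₁). Then for every real R₁ with R₁^min ≤ R₁ ≤ R₁^max, setting φ = a₁/(2^{R₁} − 1) − c₁ and m = √φ/‖g₁‖, the set { R₂^S(Q) : Q ∈ Ω, R₁^S(Q) = R₁ } has least element f_min(R₁) = log₂(1 + a₂/((m·B₁ + √(P_max − m²)·B₂)² + c₂)). (This is the consequence of Theorem 3 of the paper: the closed form of the lower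 boundary of the achievable rate region for the two suspicious links.) -/
open Matrix
open scoped ComplexOrder InnerProductSpace

set_option linter.unusedSectionVars false
section aux
variable {ι : Type*} [Fintype ι]

lemma dp_self_eq (v : ι → ℂ) :
    star v ⬝ᵥ v = ((∑ i, Complex.normSq (v i) : ℝ) : ℂ) := by
  push_cast
  simp [dotProduct, Complex.normSq_eq_conj_mul_self]

lemma dp_self_re_nonneg (v : ι → ℂ) : 0 ≤ (star v ⬝ᵥ v).re := by
  rw [dp_self_eq, Complex.ofReal_re]
  exact Finset.sum_nonneg fun i _ => Complex.normSq_nonneg _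

lemma dp_self_re_pos {v : ι → ℂ} (hv : v ≠ 0) : 0 < (star v ⬝ᵥ v).re := by
  rw [dp_self_eq, Complex.ofReal_re]
  obtain ⟨i, hi⟩ : ∃ i, v i ≠ 0 := by
    by_contra h; push_neg at h; exact hv (funext h)
  exact Finset.sum_pos' (fun j _ => Complex.normSq_nonneg _)
    ⟨i, Finset.mem_univ i, Complex.normSq_pos.mpr hi⟩

lemma dp_self_coe (v : ι → ℂ) : star v ⬝ᵥ v = (((star v ⬝ᵥ v).re : ℝ) : ℂ) := by
  rw [dp_self_eq]; simp

lemma vecMulVec_quad (v x y : ι → ℂ) :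
    star x ⬝ᵥ (vecMulVec v (star v)) *ᵥ y = (star x ⬝ᵥ v) * (star v ⬝ᵥ y) := by
  simp only [dotProduct, mulVec, vecMulVec_apply, Pi.star_apply, Finset.sum_mul,
    Finset.mul_sum]
  rw [Finset.sum_comm]
  refine Finset.sum_congr rfl fun i _ => Finset.sum_congr rfl fun j _ => by ring

lemma vecMulVec_star_conjTranspose (v : ι → ℂ) :
    (vecMulVec v (star v))ᴴ = vecMulVec v (star v) := by
  ext i j
  simp [conjTranspose_apply, vecMulVec_apply, mul_comm]

lemma vecMulVec_star_posSemidef (v : ι → ℂ) : (vecMulVec v (star v)).PosSemidef := by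
  refine PosSemidef.of_dotProduct_mulVec_nonneg (vecMulVec_star_conjTranspose v) fun x => ?_
  rw [vecMulVec_quad, star_dotProduct]
  exact star_mul_self_nonneg _

lemma vecMulVec_star_trace (v : ι → ℂ) :
    (vecMulVec v (star v)).trace = star v ⬝ᵥ v := by
  simp [trace, diag, vecMulVec_apply, dotProduct, mul_comm]

lemma vecMulVec_mul_vecMulVec (a b c d : ι → ℂ) :
    vecMulVec a b * vecMulVec c d = (b ⬝ᵥ c) • vecMulVec a d := by
  ext i j
  simp only [mul_apply, vecMulVec_apply, Matrix.smul_apply, dotProduct, smul_eq_mul,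
    Finset.sum_mul]
  refine Finset.sum_congr rfl fun k _ => by ring

lemma trace_mul_vecMulVec (Q : Matrix ι ι ℂ) (u : ι → ℂ) :
    (Q * vecMulVec u (star u)).trace = star u ⬝ᵥ Q *ᵥ u := by
  simp only [trace, diag_apply, mul_apply, vecMulVec_apply, Pi.star_apply, dotProduct,
    mulVec, Finset.mul_sum]
  refine Finset.sum_congr rfl fun i _ => Finset.sum_congr rfl fun j _ => by ring

end aux

section aux2
variable {n : ℕ}

open scoped MatrixOrder in
noncomputable def Matrix.PosSemidef.sqrt {Q : Matrix (Fin n) (Fin n) ℂ} (_hQ : Q.PosSemidef) :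
    Matrix (Fin n) (Fin n) ℂ := CFC.sqrt Q

open scoped MatrixOrder in
lemma Matrix.PosSemidef.sqrt_mul_self {Q : Matrix (Fin n) (Fin n) ℂ} (hQ : Q.PosSemidef) :
    hQ.sqrt * hQ.sqrt = Q := CFC.sqrt_mul_sqrt_self Q (nonneg_iff_posSemidef.mpr hQ)

open scoped MatrixOrder in
lemma Matrix.PosSemidef.posSemidef_sqrt {Q : Matrix (Fin n) (Fin n) ℂ} (hQ : Q.PosSemidef) :
    hQ.sqrt.PosSemidef := nonneg_iff_posSemidef.mp (CFC.sqrt_nonneg Q)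

lemma psd_dp_eq {Q : Matrix (Fin n) (Fin n) ℂ} (hQ : Q.PosSemidef) (x y : Fin n → ℂ) :
    star x ⬝ᵥ Q *ᵥ y = star (hQ.sqrt *ᵥ x) ⬝ᵥ (hQ.sqrt *ᵥ y) := by
  conv_lhs => rw [← hQ.sqrt_mul_self, ← mulVec_mulVec, dotProduct_mulVec]
  rw [star_mulVec, hQ.posSemidef_sqrt.isHermitian.eq]

lemma psd_dp_re_eq_norm {Q : Matrix (Fin n) (Fin n) ℂ} (hQ : Q.PosSemidef) (z : Fin n → ℂ) :
    (star z ⬝ᵥ Q *ᵥ z).re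
      = ‖(WithLp.equiv 2 (Fin n → ℂ)).symm (hQ.sqrt *ᵥ z)‖ ^ 2 := by
  rw [psd_dp_eq hQ, WithLp.equiv_symm_apply]
  have := inner_self_eq_norm_sq (𝕜 := ℂ) (WithLp.toLp 2 (hQ.sqrt *ᵥ z))
  rw [← this, EuclideanSpace.inner_toLp_toLp, dotProduct_comm]; rfl

lemma psd_sqrt_triangle {Q : Matrix (Fin n) (Fin n) ℂ} (hQ : Q.PosSemidef)
    (x y : Fin n → ℂ) (a b : ℂ) :
    Real.sqrt ((star (a • x + b • y) ⬝ᵥ Q *ᵥ (a • x + b • y)).re)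
      ≤ ‖a‖ * Real.sqrt ((star x ⬝ᵥ Q *ᵥ x).re)
        + ‖b‖ * Real.sqrt ((star y ⬝ᵥ Q *ᵥ y).re) := by
  simp only [psd_dp_re_eq_norm hQ]
  simp only [Real.sqrt_sq (norm_nonneg _)]
  rw [mulVec_add, mulVec_smul, mulVec_smul, WithLp.equiv_symm_apply, WithLp.toLp_add,
    WithLp.toLp_smul, WithLp.toLp_smul]
  refine (norm_add_le _ _).trans ?_
  simp [norm_smul]

lemma psd_trace_re_nonneg {M : Matrix (Fin n) (Fin n) ℂ} (hM : M.PosSemidef) :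
    0 ≤ M.trace.re := by
  have h : ∀ i, 0 ≤ (M i i).re := by
    intro i
    have h2 := hM.dotProduct_mulVec_nonneg (Pi.single i 1)
    have : star (Pi.single i 1 : Fin n → ℂ) ⬝ᵥ M *ᵥ Pi.single i 1 = M i i := by
      simp [dotProduct, mulVec, Pi.star_apply, Pi.single_apply, apply_ite, mul_ite, ite_mul]
    rw [this] at h2
    exact (Complex.le_def.mp h2).1
  rw [trace]
  simpa [Complex.re_sum] using Finset.sum_nonneg fun i _ => h i

lemma psd_trace_ge {Q : Matrix (Fin n) (Fin n) ℂ} (hQ : Q.PosSemidef)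
    (u v : Fin n → ℂ) (huu : star u ⬝ᵥ u = 1) (hvv : star v ⬝ᵥ v = 1)
    (huv : star u ⬝ᵥ v = 0) :
    (star u ⬝ᵥ Q *ᵥ u).re + (star v ⬝ᵥ Q *ᵥ v).re ≤ Q.trace.re := by
  have hvu : star v ⬝ᵥ u = 0 := by
    rw [star_dotProduct, huv, star_zero]
  set A := vecMulVec u (star u) with hA
  set B := vecMulVec v (star v) with hB
  set M := (1 : Matrix (Fin n) (Fin n) ℂ) - (A + B) with hMdef
  have hPP : (A + B) * (A + B) = A + B := by
    rw [add_mul, mul_add, mul_add, hA, hB,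
      _root_.vecMulVec_mul_vecMulVec, _root_.vecMulVec_mul_vecMulVec,
      _root_.vecMulVec_mul_vecMulVec, _root_.vecMulVec_mul_vecMulVec,
      huu, hvv, huv, hvu]
    simp
  have hMH : Mᴴ = M := by
    rw [hMdef, conjTranspose_sub, conjTranspose_add, conjTranspose_one,
      hA, hB, vecMulVec_star_conjTranspose, vecMulVec_star_conjTranspose]
  have hMM : M * M = M := by
    rw [hMdef, sub_mul, mul_sub, mul_sub, one_mul, mul_one, one_mul, hPP]
    abel
  have hMpsd : M.PosSemidef := by
    have : M = Mᴴ * M := by rw [hMH, hMM]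
    rw [this]; exact posSemidef_conjTranspose_mul_self M
  have htr : 0 ≤ (Q * M).trace.re := by
    have hS := hQ.posSemidef_sqrt
    have h1 : (hQ.sqrt * M * hQ.sqrt).PosSemidef := by
      have := hMpsd.conjTranspose_mul_mul_same hQ.sqrt
      rwa [hS.isHermitian.eq] at this
    have h2 : (hQ.sqrt * M * hQ.sqrt).trace = (Q * M).trace := by
      rw [trace_mul_cycle, hQ.sqrt_mul_self]
    rw [← h2]
    exact psd_trace_re_nonneg h1
  have hexp : (Q * M).trace = Q.trace - (star u ⬝ᵥ Q *ᵥ u + star v ⬝ᵥ Q *ᵥ v) := by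
    rw [hMdef, mul_sub, mul_one, mul_add, trace_sub, trace_add, hA, hB,
      trace_mul_vecMulVec, trace_mul_vecMulVec]
  rw [hexp] at htr
  simp only [Complex.sub_re, Complex.add_re] at htr
  linarith

end aux2

lemma phase_mul {w : ℂ} (h : w ≠ 0) :
    ((starRingEnd ℂ) w / ((‖w‖ : ℝ) : ℂ)) * w = ((‖w‖ : ℝ) : ℂ) := by
  have habs : (‖w‖ : ℝ) ≠ 0 := norm_ne_zero_iff.mpr h
  have habsC : ((‖w‖ : ℝ) : ℂ) ≠ 0 := by exact_mod_cast habs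
  field_simp
  rw [mul_comm, Complex.mul_conj]
  norm_cast
  rw [← Complex.sq_norm]

lemma phase_unit {w : ℂ} (h : w ≠ 0) :
    (starRingEnd ℂ) ((starRingEnd ℂ) w / ((‖w‖ : ℝ) : ℂ))
      * ((starRingEnd ℂ) w / ((‖w‖ : ℝ) : ℂ)) = 1 := by
  have habs : (‖w‖ : ℝ) ≠ 0 := norm_ne_zero_iff.mpr h
  have habsC : ((‖w‖ : ℝ) : ℂ) ≠ 0 := by exact_mod_cast habs
  rw [map_div₀, Complex.conj_conj, Complex.conj_ofReal]
  field_simp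
  rw [Complex.mul_conj]
  norm_cast
  rw [← Complex.sq_norm]


set_option maxHeartbeats 1000000 in
/-- Consequence of Theorem 3 of the paper: closed form of the lower boundary f_min of
the achievable rate region for the two suspicious links. -/
theorem stmt11 (n : ℕ) (hn : 1 ≤ n) (g₁ g₂ : Fin n → ℂ)
    (hli : LinearIndependent ℂ ![g₁, g₂])
    (a₁ a₂ c₁ c₂ Pmax : ℝ)
    (ha₁ : 0 < a₁) (ha₂ : 0 < a₂) (hc₁ : 0 < c₁) (hc₂ : 0 < c₂) (hPmax : 0 < Pmax)
    (gh1 gperp ghperp : Fin n → ℂ)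
    (hgh1 : gh1 = (Real.sqrt ((star g₁ ⬝ᵥ g₁).re))⁻¹ • g₁)
    (hgperp : gperp = g₂ - (star gh1 ⬝ᵥ g₂) • gh1)
    (hghperp : ghperp = (Real.sqrt ((star gperp ⬝ᵥ gperp).re))⁻¹ • gperp)
    (B₁ B₂ : ℝ)
    (hB₁ : B₁ = ‖star g₂ ⬝ᵥ gh1‖)
    (hB₂ : B₂ = ‖star g₂ ⬝ᵥ ghperp‖)
    (R₁ : ℝ)
    (hR₁l : Real.logb 2 (1 + a₁ / (Pmax * (star g₁ ⬝ᵥ g₁).re + c₁)) ≤ R₁)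
    (hR₁u : R₁ ≤ Real.logb 2 (1 + a₁ / c₁))
    (φ : ℝ) (hφ : φ = a₁ / ((2 : ℝ) ^ R₁ - 1) - c₁)
    (m : ℝ) (hm : m = Real.sqrt φ / Real.sqrt ((star g₁ ⬝ᵥ g₁).re)) :
    IsLeast
      {r : ℝ | ∃ Q : Matrix (Fin n) (Fin n) ℂ, Q.PosSemidef ∧ Q.trace.re ≤ Pmax ∧
        Real.logb 2 (1 + a₁ / ((star g₁ ⬝ᵥ Q.mulVec g₁).re + c₁)) = R₁ ∧
        r = Real.logb 2 (1 + a₂ / ((star g₂ ⬝ᵥ Q.mulVec g₂).re + c₂))}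
      (Real.logb 2 (1 + a₂ /
        ((m * B₁ + Real.sqrt (Pmax - m ^ 2) * B₂) ^ 2 + c₂))) := by
  classical
  have hg₁ne : g₁ ≠ 0 := by simpa using hli.ne_zero 0
  set N1 : ℝ := (star g₁ ⬝ᵥ g₁).re with hN1def
  have hN1 : 0 < N1 := dp_self_re_pos hg₁ne
  set n1 : ℝ := Real.sqrt N1 with hn1def
  have hn1 : 0 < n1 := Real.sqrt_pos.mpr hN1
  have hn1sq : n1 ^ 2 = N1 := Real.sq_sqrt hN1.le
  have hg1coe : star g₁ ⬝ᵥ g₁ = (N1 : ℂ) := dp_self_coe g₁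
  have rsmul : ∀ (r : ℝ) (x : Fin n → ℂ), r • x = ((r : ℂ)) • x := by
    intro r x; funext i; simp [Complex.real_smul]
  have hgh1' : gh1 = (((n1)⁻¹ : ℝ) : ℂ) • g₁ := by rw [hgh1, rsmul]
  have K1 : star gh1 ⬝ᵥ gh1 = 1 := by
    rw [hgh1', star_smul, smul_dotProduct, dotProduct_smul, hg1coe]
    simp only [smul_eq_mul, Complex.star_def, Complex.conj_ofReal]
    norm_cast
    rw [← hn1sq]; field_simp
  set α : ℂ := star gh1 ⬝ᵥ g₂ with hαdef
  have K1p : star gh1 ⬝ᵥ gperp = 0 := by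
    rw [hgperp, dotProduct_sub, dotProduct_smul, K1, smul_eq_mul, mul_one, sub_self]
  have hgpne : gperp ≠ 0 := by
    intro h0
    have hg₂ : g₂ = α • gh1 := by
      have h1 : g₂ - α • gh1 = 0 := by rw [← hgperp, h0]
      exact (sub_eq_zero.mp h1)
    have hg₂' : (α * (((n1)⁻¹ : ℝ) : ℂ)) • g₁ = g₂ := by
      rw [hg₂, hgh1', smul_smul]
    obtain ⟨h1, h2⟩ := (LinearIndependent.pair_iff.mp hli) (α * (((n1)⁻¹ : ℝ) : ℂ)) (-1)
      (by rw [neg_one_smul, hg₂', add_neg_cancel])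
    exact absurd h2 (by norm_num)
  set Np : ℝ := (star gperp ⬝ᵥ gperp).re with hNpdef
  have hNp : 0 < Np := dp_self_re_pos hgpne
  set np : ℝ := Real.sqrt Np with hnpdef
  have hnp : 0 < np := Real.sqrt_pos.mpr hNp
  have hnpsq : np ^ 2 = Np := Real.sq_sqrt hNp.le
  have hgpcoe : star gperp ⬝ᵥ gperp = (Np : ℂ) := dp_self_coe gperp
  have hghperp' : ghperp = (((np)⁻¹ : ℝ) : ℂ) • gperp := by rw [hghperp, rsmul]
  have K2 : star ghperp ⬝ᵥ ghperp = 1 := by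
    rw [hghperp', star_smul, smul_dotProduct, dotProduct_smul, hgpcoe]
    simp only [smul_eq_mul, Complex.star_def, Complex.conj_ofReal]
    norm_cast
    rw [← hnpsq]; field_simp
  have K12 : star gh1 ⬝ᵥ ghperp = 0 := by
    rw [hghperp', dotProduct_smul, K1p, smul_zero]
  have K21 : star ghperp ⬝ᵥ gh1 = 0 := by rw [star_dotProduct, K12, star_zero]
  have hnpsmul : ((np : ℝ) : ℂ) • ghperp = gperp := by
    rw [hghperp', smul_smul]
    have h : ((np:ℝ):ℂ) * (((np)⁻¹ : ℝ) : ℂ) = 1 := by norm_cast; field_simp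
    rw [h, one_smul]
  have hg₂dec : g₂ = α • gh1 + ((np : ℝ) : ℂ) • ghperp := by
    rw [hnpsmul, hgperp]; abel
  have hwα : star g₂ ⬝ᵥ gh1 = star α := by rw [hαdef, star_dotProduct]
  have hB₁α : B₁ = ‖α‖ := by
    rw [hB₁, hwα, Complex.star_def, Complex.norm_conj]
  have hgpg2 : star ghperp ⬝ᵥ g₂ = ((np:ℝ):ℂ) := by
    conv_lhs => rw [hg₂dec]
    rw [dotProduct_add, dotProduct_smul, K21, dotProduct_smul, K2]
    simp
  have hg2gp : star g₂ ⬝ᵥ ghperp = ((np:ℝ):ℂ) := by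
    rw [star_dotProduct, hgpg2, Complex.star_def, Complex.conj_ofReal]
  have hB₂np : B₂ = np := by rw [hB₂, hg2gp, Complex.norm_real, Real.norm_eq_abs, abs_of_pos hnp]
  -- g₁ - gh1 relations
  have hg1gh1 : star g₁ ⬝ᵥ gh1 = ((n1:ℝ):ℂ) := by
    rw [hgh1', dotProduct_smul, hg1coe, smul_eq_mul]
    norm_cast
    rw [← hn1sq]; field_simp
  have hgh1g1 : star gh1 ⬝ᵥ g₁ = ((n1:ℝ):ℂ) := by
    rw [star_dotProduct, hg1gh1, Complex.star_def, Complex.conj_ofReal]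
  have hg1smul : g₁ = ((n1:ℝ):ℂ) • gh1 := by
    rw [hgh1', smul_smul]
    have h : ((n1:ℝ):ℂ) * (((n1)⁻¹ : ℝ) : ℂ) = 1 := by norm_cast; field_simp
    rw [h, one_smul]
  have hghpg1 : star ghperp ⬝ᵥ g₁ = 0 := by
    conv_lhs => rw [hg1smul]
    rw [dotProduct_smul, K21, smul_zero]
  have hg1ghp : star g₁ ⬝ᵥ ghperp = 0 := by
    rw [star_dotProduct, hghpg1, star_zero]
  -- scalar facts
  have h1lt : (1:ℝ) < 1 + a₁ / (Pmax * N1 + c₁) := by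
    have h : 0 < a₁ / (Pmax * N1 + c₁) := by positivity
    linarith
  have hR1pos : 0 < R₁ := lt_of_lt_of_le (Real.logb_pos one_lt_two h1lt) hR₁l
  have h2R : 1 < (2:ℝ) ^ R₁ := by
    rw [Real.one_lt_rpow_iff_of_pos (by norm_num)]
    exact Or.inl ⟨one_lt_two, hR1pos⟩
  set e := (2:ℝ) ^ R₁ - 1 with hedef
  have he : 0 < e := by rw [hedef]; linarith
  have hup : (2:ℝ) ^ R₁ ≤ 1 + a₁ / c₁ := by
    calc (2:ℝ)^R₁ ≤ 2 ^ (Real.logb 2 (1 + a₁/c₁)) :=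
          (Real.rpow_le_rpow_left_iff one_lt_two).mpr hR₁u
      _ = 1 + a₁/c₁ := Real.rpow_logb two_pos (by norm_num) (by positivity)
  have hlow : 1 + a₁ / (Pmax * N1 + c₁) ≤ (2:ℝ) ^ R₁ := by
    calc 1 + a₁/(Pmax*N1+c₁) = 2 ^ (Real.logb 2 (1 + a₁/(Pmax*N1+c₁))) :=
          (Real.rpow_logb two_pos (by norm_num) (by positivity)).symm
      _ ≤ 2 ^ R₁ := (Real.rpow_le_rpow_left_iff one_lt_two).mpr hR₁l
  have he' : e ≤ a₁ / c₁ := by rw [hedef]; linarith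
  have hφnn : 0 ≤ φ := by
    have h2 : e * c₁ ≤ a₁ := (le_div_iff₀ hc₁).mp he'
    rw [hφ, sub_nonneg, le_div_iff₀ he]; linarith
  have hφub : φ ≤ Pmax * N1 := by
    have h1 : a₁ / (Pmax*N1 + c₁) ≤ e := by rw [hedef]; linarith
    have h2 : a₁ ≤ e * (Pmax*N1+c₁) := (div_le_iff₀ (by positivity)).mp h1
    have h3 : a₁ / e ≤ Pmax*N1 + c₁ := (div_le_iff₀ he).mpr (by linarith)
    rw [hφ]; linarith
  have hφc : φ + c₁ = a₁ / e := by rw [hφ]; ring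
  have hm0 : 0 ≤ m := by rw [hm]; positivity
  have hmsq : m ^ 2 * N1 = φ := by
    rw [hm, div_pow, Real.sq_sqrt hφnn, hn1sq]
    field_simp
  have hm2P : m ^ 2 ≤ Pmax := by
    have h := hφub
    rw [← hmsq] at h
    exact le_of_mul_le_mul_right h hN1
  set t := Real.sqrt (Pmax - m ^ 2) with htdef
  have ht0 : 0 ≤ t := Real.sqrt_nonneg _
  have ht2 : t ^ 2 = Pmax - m ^ 2 := Real.sq_sqrt (by linarith)
  constructor
  · -- membership: the optimal rank-one jamming covariance
    set w : ℂ := star g₂ ⬝ᵥ gh1 with hwdef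
    set p : ℂ := if w = 0 then 1 else (starRingEnd ℂ) w / ((‖w‖ : ℝ) : ℂ) with hpdef
    have hpw : p * w = ((B₁:ℝ) : ℂ) := by
      by_cases h : w = 0
      · rw [hB₁, h]; simp [hpdef, h]
      · rw [hpdef, if_neg h, hB₁, phase_mul h]
    have hp1 : (starRingEnd ℂ) p * p = 1 := by
      by_cases h : w = 0
      · simp [hpdef, h]
      · rw [hpdef, if_neg h]
        exact phase_unit h
    set v : Fin n → ℂ := (((m:ℝ):ℂ) * p) • gh1 + ((t:ℝ):ℂ) • ghperp with hvdef
    have hdv : ∀ x : Fin n → ℂ, star x ⬝ᵥ v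
        = ((m:ℝ):ℂ) * p * (star x ⬝ᵥ gh1) + ((t:ℝ):ℂ) * (star x ⬝ᵥ ghperp) := by
      intro x
      rw [hvdef, dotProduct_add, dotProduct_smul, dotProduct_smul]
      simp [smul_eq_mul]
    have hsv : ∀ z : Fin n → ℂ, star v ⬝ᵥ z
        = (starRingEnd ℂ) (((m:ℝ):ℂ) * p) * (star gh1 ⬝ᵥ z)
          + ((t:ℝ):ℂ) * (star ghperp ⬝ᵥ z) := by
      intro z
      rw [hvdef, star_add, star_smul, star_smul, add_dotProduct, smul_dotProduct,
        smul_dotProduct]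
      simp [smul_eq_mul, Complex.star_def, Complex.conj_ofReal]
    have hvv : star v ⬝ᵥ v = ((Pmax : ℝ) : ℂ) := by
      rw [hsv v, hdv gh1, hdv ghperp, K1, K12, K21, K2]
      simp only [_root_.map_mul, Complex.conj_ofReal, mul_one, mul_zero, add_zero, zero_add]
      have hc : ((t:ℝ):ℂ)^2 = ((Pmax:ℝ):ℂ) - ((m:ℝ):ℂ)^2 := by
        exact_mod_cast congrArg (Complex.ofReal) ht2
      linear_combination ((m:ℝ):ℂ)^2 * hp1 + hc
    refine ⟨vecMulVec v (star v), vecMulVec_star_posSemidef v, ?_, ?_, ?_⟩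
    · rw [vecMulVec_star_trace, hvv]; simp
    · have hQg1 : star g₁ ⬝ᵥ (vecMulVec v (star v)) *ᵥ g₁ = ((φ:ℝ) : ℂ) := by
        rw [vecMulVec_quad, hdv g₁, hsv g₁, hg1gh1, hg1ghp, hgh1g1, hghpg1]
        simp only [_root_.map_mul, Complex.conj_ofReal, mul_zero, add_zero]
        have hφℂ : ((m:ℝ):ℂ)^2 * ((n1:ℝ):ℂ)^2 = ((φ:ℝ):ℂ) := by
          norm_cast
          rw [hn1sq]; exact hmsq
        linear_combination ((m:ℝ):ℂ)^2 * ((n1:ℝ):ℂ)^2 * hp1 + hφℂ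
      rw [hQg1, Complex.ofReal_re]
      have harg : 1 + a₁ / (φ + c₁) = (2:ℝ) ^ R₁ := by
        rw [hφc]
        have h4 : a₁ / (a₁ / e) = e := by
          field_simp
        rw [h4, hedef]; ring
      rw [harg, Real.logb_rpow (by norm_num) (by norm_num)]
    · have hx : star g₂ ⬝ᵥ v = (((m*B₁ + t*B₂) : ℝ) : ℂ) := by
        rw [hdv g₂, ← hwdef, hg2gp, mul_assoc, hpw]
        push_cast
        rw [hB₂np]
      have hQg2 : star g₂ ⬝ᵥ (vecMulVec v (star v)) *ᵥ g₂
          = ((((m*B₁+t*B₂)^2) : ℝ) : ℂ) := by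
        rw [vecMulVec_quad, hx, star_dotProduct, hx, Complex.star_def,
          Complex.conj_ofReal]
        push_cast
        ring
      rw [hQg2, Complex.ofReal_re]
  · -- lower bound
    rintro r ⟨Q, hPSD, htrace, hRQ, hr⟩
    have hq10 : 0 ≤ (star g₁ ⬝ᵥ Q *ᵥ g₁).re := by
      simpa using hPSD.re_dotProduct_nonneg g₁
    have hXpos : (0:ℝ) < 1 + a₁ / ((star g₁ ⬝ᵥ Q *ᵥ g₁).re + c₁) := by positivity
    have hX : 1 + a₁ / ((star g₁ ⬝ᵥ Q *ᵥ g₁).re + c₁) = (2:ℝ)^R₁ := by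
      rw [← hRQ]
      exact (Real.rpow_logb two_pos (by norm_num) hXpos).symm
    have hq₁φ : (star g₁ ⬝ᵥ Q *ᵥ g₁).re = φ := by
      have h1 : a₁ / ((star g₁ ⬝ᵥ Q *ᵥ g₁).re + c₁) = e := by rw [hedef]; linarith
      have h2 : a₁ = e * ((star g₁ ⬝ᵥ Q *ᵥ g₁).re + c₁) := by
        rw [← h1]
        field_simp
      have h3 : a₁ / e = (star g₁ ⬝ᵥ Q *ᵥ g₁).re + c₁ := by
        rw [h2]; field_simp
      rw [hφ]; linarith
    have hgh1Q : star gh1 ⬝ᵥ Q *ᵥ gh1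
        = ((((n1)⁻¹ * (n1)⁻¹ : ℝ)):ℂ) * (star g₁ ⬝ᵥ Q *ᵥ g₁) := by
      conv_lhs => rw [hgh1']
      rw [star_smul, smul_dotProduct, mulVec_smul, dotProduct_smul]
      simp only [smul_eq_mul, Complex.star_def, Complex.conj_ofReal]
      push_cast
      ring
    have hqh : (star gh1 ⬝ᵥ Q *ᵥ gh1).re = m ^ 2 := by
      rw [hgh1Q, Complex.re_ofReal_mul, hq₁φ, ← hmsq, ← hn1sq]
      field_simp
    have hqp0 : 0 ≤ (star ghperp ⬝ᵥ Q *ᵥ ghperp).re := by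
      simpa using hPSD.re_dotProduct_nonneg ghperp
    have htrge := psd_trace_ge hPSD gh1 ghperp K1 K2 K12
    have hqpub : (star ghperp ⬝ᵥ Q *ᵥ ghperp).re ≤ Pmax - m^2 := by
      rw [hqh] at htrge; linarith
    have hsqle : Real.sqrt ((star ghperp ⬝ᵥ Q *ᵥ ghperp).re) ≤ t := by
      rw [htdef]
      exact Real.sqrt_le_sqrt hqpub
    have htri := psd_sqrt_triangle hPSD gh1 ghperp α ((np:ℝ):ℂ)
    rw [← hg₂dec, hqh, Real.sqrt_sq hm0, ← hB₁α, Complex.norm_real, Real.norm_eq_abs,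
      abs_of_pos hnp, ← hB₂np] at htri
    have hs0 : 0 ≤ (star g₂ ⬝ᵥ Q *ᵥ g₂).re := by
      simpa using hPSD.re_dotProduct_nonneg g₂
    have hB₂0 : 0 ≤ B₂ := by rw [hB₂np]; exact hnp.le
    have h1 : Real.sqrt ((star g₂ ⬝ᵥ Q *ᵥ g₂).re) ≤ m * B₁ + t * B₂ := by
      refine htri.trans ?_
      have h3 := mul_le_mul_of_nonneg_left hsqle hB₂0
      linarith
    have hkey : (star g₂ ⬝ᵥ Q *ᵥ g₂).re ≤ (m*B₁ + t*B₂)^2 := by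
      calc (star g₂ ⬝ᵥ Q *ᵥ g₂).re
          = (Real.sqrt ((star g₂ ⬝ᵥ Q *ᵥ g₂).re))^2 := (Real.sq_sqrt hs0).symm
        _ ≤ (m*B₁+t*B₂)^2 := pow_le_pow_left₀ (Real.sqrt_nonneg _) h1 2
    rw [hr]
    have hd1 : 0 < (star g₂ ⬝ᵥ Q *ᵥ g₂).re + c₂ := by linarith
    refine Real.logb_le_logb_of_le one_lt_two (by positivity) ?_
    have hmono : a₂ / ((m*B₁ + t*B₂)^2 + c₂)
        ≤ a₂ / ((star g₂ ⬝ᵥ Q *ᵥ g₂).re + c₂) :=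
      div_le_div_of_nonneg_left ha₂.le hd1 (by linarith)
    linarith
end

section
/- Let a₁, a₂, c₁, c₂, P > 0, B₁ > 0, B₂ > 0 and L > 0 be real numbers (L standing for ‖g₁‖², with L·P appearing as the maximal deliverable jamming power at receiver 1). Define φ(R) = a₁/(2^R − 1) − c₁, m(R) = √(φ(R))/√L, and f_min(R) = log₂(1 + a₂/((m(R)·B₁ + √(P − m(R)²)·B₂)² + c₂)). Define R₁^min = log₂(1 + a₁/(P·L + c₁)), R₁^max = log₂(1 + a₁/c₁), and R₁^MRT2 = log₂(1 + a₁/(P·L·B₁²/(B₁² + B₂²) + c₁)). Then f_min is strictly decreasing on [R₁^min, R₁^MRT2] and strictly increasing on [R₁^MRT2, R₁^max]. (This is Proposition 2 of the paper: the lower boundary curve of the achievable rate region for the two suspicious links first decreases and then increases in R₁, with turning point at the rate achieved by full-power maximum-ratio jamming toward receiver 2.) -/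
lemma key_dec (P B₁ B₂ x y : ℝ) (hB₁ : 0 < B₁) (hB₂ : 0 < B₂)
    (hx0 : 0 ≤ x) (hxy : x < y) (hy : y ^ 2 ≤ P)
    (hxm : P * B₁ ^ 2 ≤ x ^ 2 * (B₁ ^ 2 + B₂ ^ 2)) :
    y * B₁ + Real.sqrt (P - y ^ 2) * B₂ < x * B₁ + Real.sqrt (P - x ^ 2) * B₂ := by
  have hx2y2 : x ^ 2 < y ^ 2 := by nlinarith
  have hy2 : (0:ℝ) ≤ P - y ^ 2 := by linarith
  have hx2 : (0:ℝ) ≤ P - x ^ 2 := by linarith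
  set s := Real.sqrt (P - x ^ 2) with hs_def
  set t := Real.sqrt (P - y ^ 2) with ht_def
  have hs : s ^ 2 = P - x ^ 2 := Real.sq_sqrt hx2
  have ht : t ^ 2 = P - y ^ 2 := Real.sq_sqrt hy2
  have hs0 : 0 ≤ s := Real.sqrt_nonneg _
  have ht0 : 0 ≤ t := Real.sqrt_nonneg _
  have hy0 : 0 < y := lt_of_le_of_lt hx0 hxy
  have h1 : B₁ * s ≤ B₂ * x := by
    have hsq : (B₁ * s) ^ 2 ≤ (B₂ * x) ^ 2 := by nlinarith
    exact le_of_pow_le_pow_left₀ two_ne_zero (by positivity) hsq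
  have h2 : B₁ * t < B₂ * y := by
    have hsq : (B₁ * t) ^ 2 < (B₂ * y) ^ 2 := by
      nlinarith [mul_lt_mul_of_pos_right hx2y2 (show (0:ℝ) < B₁ ^ 2 + B₂ ^ 2 by positivity), ht]
    exact lt_of_pow_lt_pow_left₀ 2 (by positivity) hsq
  have hst : t < s := by
    have : t ^ 2 < s ^ 2 := by nlinarith
    exact lt_of_pow_lt_pow_left₀ 2 hs0 this
  have hsum : 0 < s + t := by linarith
  have h3 : 0 < (y - x) * (B₂ * (x + y) - B₁ * (s + t)) := by
    apply mul_pos (by linarith) (by linarith)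
  nlinarith [h3, hs, ht, hsum, mul_pos hsum hsum]

lemma key_inc (P B₁ B₂ x y : ℝ) (hB₁ : 0 < B₁) (hB₂ : 0 < B₂)
    (hx0 : 0 ≤ x) (hxy : x < y)
    (hym : y ^ 2 * (B₁ ^ 2 + B₂ ^ 2) ≤ P * B₁ ^ 2) :
    x * B₁ + Real.sqrt (P - x ^ 2) * B₂ < y * B₁ + Real.sqrt (P - y ^ 2) * B₂ := by
  have hx2y2 : x ^ 2 < y ^ 2 := by nlinarith
  have hy0 : 0 < y := lt_of_le_of_lt hx0 hxy
  have hy2 : (0:ℝ) < P - y ^ 2 := by nlinarith [mul_pos hB₁ hB₁, mul_pos (mul_pos hy0 hy0) (mul_pos hB₂ hB₂)]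
  have hx2 : (0:ℝ) ≤ P - x ^ 2 := by linarith
  set s := Real.sqrt (P - x ^ 2) with hs_def
  set t := Real.sqrt (P - y ^ 2) with ht_def
  have hs : s ^ 2 = P - x ^ 2 := Real.sq_sqrt hx2
  have ht : t ^ 2 = P - y ^ 2 := Real.sq_sqrt hy2.le
  have hs0 : 0 ≤ s := Real.sqrt_nonneg _
  have ht0 : 0 < t := Real.sqrt_pos.2 hy2
  have h1 : B₂ * y ≤ B₁ * t := by
    have hsq : (B₂ * y) ^ 2 ≤ (B₁ * t) ^ 2 := by nlinarith
    exact le_of_pow_le_pow_left₀ two_ne_zero (by positivity) hsq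
  have h2 : B₂ * x < B₁ * s := by
    have hsq : (B₂ * x) ^ 2 < (B₁ * s) ^ 2 := by
      nlinarith [mul_lt_mul_of_pos_right hx2y2 (show (0:ℝ) < B₁ ^ 2 + B₂ ^ 2 by positivity), hs]
    exact lt_of_pow_lt_pow_left₀ 2 (by positivity) hsq
  have hst : t < s := by
    have : t ^ 2 < s ^ 2 := by nlinarith
    exact lt_of_pow_lt_pow_left₀ 2 hs0 this
  have hsum : 0 < s + t := by linarith
  have h3 : 0 < (y - x) * (B₁ * (s + t) - B₂ * (x + y)) := by
    apply mul_pos (by linarith) (by linarith)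
  nlinarith [h3, hs, ht, hsum, mul_pos hsum hsum]

lemma phi_eval (a u : ℝ) (ha : 0 < a) (hu : 0 < u) :
    a / ((2:ℝ) ^ (Real.logb 2 (1 + a / u)) - 1) = u := by
  rw [Real.rpow_logb two_pos (by norm_num) (by positivity)]
  have h : (1 + a / u - 1) = a / u := by ring
  rw [h]
  field_simp

lemma logb_pt_pos (a u : ℝ) (ha : 0 < a) (hu : 0 < u) :
    0 < Real.logb 2 (1 + a / u) := by
  apply Real.logb_pos one_lt_two
  have := div_pos ha hu
  linarith

lemma two_rpow_gt_one {R : ℝ} (hR : 0 < R) : 1 < (2:ℝ) ^ R :=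
  (Real.one_lt_rpow_iff_of_pos two_pos).2 (Or.inl ⟨one_lt_two, hR⟩)

lemma phi_anti (a : ℝ) (ha : 0 < a) {R S : ℝ} (hR : 0 < R) (hRS : R ≤ S) :
    a / ((2:ℝ) ^ S - 1) ≤ a / ((2:ℝ) ^ R - 1) := by
  have h1 : 1 < (2:ℝ) ^ R := two_rpow_gt_one hR
  have h2 : (2:ℝ) ^ R ≤ (2:ℝ) ^ S := (Real.rpow_le_rpow_left_iff one_lt_two).2 hRS
  apply div_le_div_of_nonneg_left ha.le (by linarith) (by linarith)

lemma phi_anti_strict (a : ℝ) (ha : 0 < a) {R S : ℝ} (hR : 0 < R) (hRS : R < S) :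
    a / ((2:ℝ) ^ S - 1) < a / ((2:ℝ) ^ R - 1) := by
  have h1 : 1 < (2:ℝ) ^ R := two_rpow_gt_one hR
  have h2 : (2:ℝ) ^ R < (2:ℝ) ^ S := (Real.rpow_lt_rpow_left_iff one_lt_two).2 hRS
  exact div_lt_div_of_pos_left ha (by linarith) (by linarith)

lemma branch_core (a₂ c₂ P B₁ B₂ u v : ℝ) (ha₂ : 0 < a₂) (hc₂ : 0 < c₂)
    (hB₁ : 0 ≤ B₁) (hB₂ : 0 ≤ B₂) (hu0 : 0 ≤ u)
    (hlt : u * B₁ + Real.sqrt (P - u ^ 2) * B₂ < v * B₁ + Real.sqrt (P - v ^ 2) * B₂) :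
    Real.logb 2 (1 + a₂ / ((v * B₁ + Real.sqrt (P - v ^ 2) * B₂) ^ 2 + c₂)) <
    Real.logb 2 (1 + a₂ / ((u * B₁ + Real.sqrt (P - u ^ 2) * B₂) ^ 2 + c₂)) := by
  set Hu := u * B₁ + Real.sqrt (P - u ^ 2) * B₂ with hHu
  set Hv := v * B₁ + Real.sqrt (P - v ^ 2) * B₂ with hHv
  have hHu0 : 0 ≤ Hu := by
    apply add_nonneg (mul_nonneg hu0 hB₁) (mul_nonneg (Real.sqrt_nonneg _) hB₂)
  have hsq : Hu ^ 2 < Hv ^ 2 := by nlinarith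
  have hgu : 0 < Hu ^ 2 + c₂ := by positivity
  have hgv : 0 < Hv ^ 2 + c₂ := by positivity
  have hdiv : a₂ / (Hv ^ 2 + c₂) < a₂ / (Hu ^ 2 + c₂) :=
    div_lt_div_of_pos_left ha₂ hgu (by linarith)
  apply Real.logb_lt_logb one_lt_two (by positivity) (by linarith)


/-- Proposition 2 of the paper: the lower boundary curve f_min is strictly decreasing on
[R₁^min, R₁^MRT2] and strictly increasing on [R₁^MRT2, R₁^max]. -/
theorem stmt12 (a₁ a₂ c₁ c₂ P B₁ B₂ L : ℝ)
    (ha₁ : 0 < a₁) (ha₂ : 0 < a₂) (hc₁ : 0 < c₁) (hc₂ : 0 < c₂)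
    (hP : 0 < P) (hB₁ : 0 < B₁) (hB₂ : 0 < B₂) (hL : 0 < L) :
    StrictAntiOn
      (fun R : ℝ => Real.logb 2 (1 + a₂ /
        (((Real.sqrt (a₁ / ((2 : ℝ) ^ R - 1) - c₁) / Real.sqrt L) * B₁ +
          Real.sqrt (P - (Real.sqrt (a₁ / ((2 : ℝ) ^ R - 1) - c₁) / Real.sqrt L) ^ 2) * B₂) ^ 2
          + c₂)))
      (Set.Icc (Real.logb 2 (1 + a₁ / (P * L + c₁)))
        (Real.logb 2 (1 + a₁ / (P * L * B₁ ^ 2 / (B₁ ^ 2 + B₂ ^ 2) + c₁)))) ∧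
    StrictMonoOn
      (fun R : ℝ => Real.logb 2 (1 + a₂ /
        (((Real.sqrt (a₁ / ((2 : ℝ) ^ R - 1) - c₁) / Real.sqrt L) * B₁ +
          Real.sqrt (P - (Real.sqrt (a₁ / ((2 : ℝ) ^ R - 1) - c₁) / Real.sqrt L) ^ 2) * B₂) ^ 2
          + c₂)))
      (Set.Icc (Real.logb 2 (1 + a₁ / (P * L * B₁ ^ 2 / (B₁ ^ 2 + B₂ ^ 2) + c₁)))
        (Real.logb 2 (1 + a₁ / c₁))) := by
  have hD : (0:ℝ) < B₁ ^ 2 + B₂ ^ 2 := by positivity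
  set Q := P * L * B₁ ^ 2 / (B₁ ^ 2 + B₂ ^ 2) with hQdef
  have hQpos : 0 < Q := by positivity
  have hQD : Q * (B₁ ^ 2 + B₂ ^ 2) = P * L * B₁ ^ 2 := by
    rw [hQdef]; exact div_mul_cancel₀ _ hD.ne'
  -- evaluations at the three endpoints
  have hEmin : a₁ / ((2:ℝ) ^ (Real.logb 2 (1 + a₁ / (P * L + c₁))) - 1) = P * L + c₁ :=
    phi_eval a₁ _ ha₁ (by positivity)
  have hEmrt : a₁ / ((2:ℝ) ^ (Real.logb 2 (1 + a₁ / (Q + c₁))) - 1) = Q + c₁ :=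
    phi_eval a₁ _ ha₁ (by positivity)
  have hEmax : a₁ / ((2:ℝ) ^ (Real.logb 2 (1 + a₁ / c₁)) - 1) = c₁ :=
    phi_eval a₁ _ ha₁ hc₁
  have hRminpos : 0 < Real.logb 2 (1 + a₁ / (P * L + c₁)) :=
    logb_pt_pos a₁ _ ha₁ (by positivity)
  have hRmrtpos : 0 < Real.logb 2 (1 + a₁ / (Q + c₁)) :=
    logb_pt_pos a₁ _ ha₁ (by positivity)
  constructor
  · -- decreasing branch
    intro R hR S hS hRS
    simp only [Set.mem_Icc] at hR hS
    have hRpos : 0 < R := lt_of_lt_of_le hRminpos hR.1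
    have hSpos : 0 < S := lt_of_lt_of_le hRminpos hS.1
    let φR := a₁ / ((2:ℝ) ^ R - 1) - c₁
    let φS := a₁ / ((2:ℝ) ^ S - 1) - c₁
    have hφRdef : φR = a₁ / ((2:ℝ) ^ R - 1) - c₁ := rfl
    have hφSdef : φS = a₁ / ((2:ℝ) ^ S - 1) - c₁ := rfl
    have hφRle : φR ≤ P * L := by
      have := phi_anti a₁ ha₁ hRminpos hR.1
      rw [hEmin] at this; rw [hφRdef]; linarith
    have hφSge : Q ≤ φS := by
      have := phi_anti a₁ ha₁ hSpos hS.2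
      rw [hEmrt] at this; rw [hφSdef]; linarith
    have hφlt : φS < φR := by
      have := phi_anti_strict a₁ ha₁ hRpos hRS
      rw [hφRdef, hφSdef]; linarith
    have hφS0 : 0 ≤ φS := le_trans hQpos.le hφSge
    have hφR0 : 0 ≤ φR := le_trans hφS0 hφlt.le
    set x := Real.sqrt φS / Real.sqrt L with hxdef
    set y := Real.sqrt φR / Real.sqrt L with hydef
    have hsL : 0 < Real.sqrt L := Real.sqrt_pos.2 hL
    have hxy : x < y :=
      (div_lt_div_iff_of_pos_right hsL).2 (Real.sqrt_lt_sqrt hφS0 hφlt)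
    have hx0 : 0 ≤ x := div_nonneg (Real.sqrt_nonneg _) hsL.le
    have hx2 : x ^ 2 = φS / L := by
      rw [hxdef, div_pow, Real.sq_sqrt hφS0, Real.sq_sqrt hL.le]
    have hy2 : y ^ 2 = φR / L := by
      rw [hydef, div_pow, Real.sq_sqrt hφR0, Real.sq_sqrt hL.le]
    have hyP : y ^ 2 ≤ P := by
      rw [hy2, div_le_iff₀ hL]; linarith
    have hxm : P * B₁ ^ 2 ≤ x ^ 2 * (B₁ ^ 2 + B₂ ^ 2) := by
      rw [hx2, div_mul_eq_mul_div, le_div_iff₀ hL]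
      have h := mul_le_mul_of_nonneg_right hφSge hD.le
      linarith [hQD]
    have hkey := key_dec P B₁ B₂ x y hB₁ hB₂ hx0 hxy hyP hxm
    exact branch_core a₂ c₂ P B₁ B₂ y x ha₂ hc₂ hB₁.le hB₂.le
      (le_trans hx0 hxy.le) hkey
  · -- increasing branch
    intro R hR S hS hRS
    simp only [Set.mem_Icc] at hR hS
    have hRpos : 0 < R := lt_of_lt_of_le hRmrtpos hR.1
    have hSpos : 0 < S := lt_of_lt_of_le hRmrtpos hS.1
    let φR := a₁ / ((2:ℝ) ^ R - 1) - c₁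
    let φS := a₁ / ((2:ℝ) ^ S - 1) - c₁
    have hφRdef : φR = a₁ / ((2:ℝ) ^ R - 1) - c₁ := rfl
    have hφSdef : φS = a₁ / ((2:ℝ) ^ S - 1) - c₁ := rfl
    have hφRle : φR ≤ Q := by
      have := phi_anti a₁ ha₁ hRmrtpos hR.1
      rw [hEmrt] at this; rw [hφRdef]; linarith
    have hφS0 : 0 ≤ φS := by
      have := phi_anti a₁ ha₁ hSpos hS.2
      rw [hEmax] at this; rw [hφSdef]; linarith
    have hφlt : φS < φR := by
      have := phi_anti_strict a₁ ha₁ hRpos hRS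
      rw [hφRdef, hφSdef]; linarith
    have hφR0 : 0 ≤ φR := le_trans hφS0 hφlt.le
    set x := Real.sqrt φS / Real.sqrt L with hxdef
    set y := Real.sqrt φR / Real.sqrt L with hydef
    have hsL : 0 < Real.sqrt L := Real.sqrt_pos.2 hL
    have hxy : x < y :=
      (div_lt_div_iff_of_pos_right hsL).2 (Real.sqrt_lt_sqrt hφS0 hφlt)
    have hx0 : 0 ≤ x := div_nonneg (Real.sqrt_nonneg _) hsL.le
    have hy2 : y ^ 2 = φR / L := by
      rw [hydef, div_pow, Real.sq_sqrt hφR0, Real.sq_sqrt hL.le]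
    have hym : y ^ 2 * (B₁ ^ 2 + B₂ ^ 2) ≤ P * B₁ ^ 2 := by
      rw [hy2, div_mul_eq_mul_div, div_le_iff₀ hL]
      have h := mul_le_mul_of_nonneg_right hφRle hD.le
      linarith [hQD]
    have hkey := key_inc P B₁ B₂ x y hB₁ hB₂ hx0 hxy hym
    exact branch_core a₂ c₂ P B₁ B₂ x y ha₂ hc₂ hB₁.le hB₂.le hx0 hkey
end

section
/- Let n ≥ 1, let g₁, g₂ ∈ ℂⁿ be linearly independent, and let P > 0. Define ĝ₁ = g₁/‖g₁‖, g₁⊥ = g₂ − (ĝ₁ᴴg₂)ĝ₁, ĝ₁⊥ = g₁⊥/‖g₁⊥‖, B₁ = |g₂ᴴĝ₁| and B₂ = |g₂ᴴĝ₁⊥|. Let φ₁, φ₂ ≥ 0 be real numbers with φ₁ ≤ P·‖g₁‖², set m = √(φ₁)/‖g₁‖, and assume |m·B₁ − √(φ₂)| ≤ √(P − m²)·B₂. Then the vector w = ε₁·ĝ₁ + ε₂·ĝ₁⊥ with ε₁ = m·e^{−i·arg(g₂ᴴĝ₁)} and ε₂ = ((√(φ₂) − m·B₁)/B₂)·e^{−i·arg(g₂ᴴĝ₁⊥)}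 satisfies ‖w‖² ≤ P, |g₁ᴴw|² = φ₁ and |g₂ᴴw|² = φ₂; in particular there exists a jamming beamformer within the power budget delivering exactly jamming power φ₁ at receiver 1 and φ₂ at receiver 2. (This is Proposition 3 of the paper: every rate pair lying between the lower and upper boundary curves of the achievable rate region for the suspicious links is achievable with a single jamming beamforming vector of power at most P.) -/
open scoped InnerProductSpace

lemma exp_neg_arg_mul_self (z : ℂ) :
    Complex.exp (-(Complex.arg z : ℂ) * Complex.I) * z = (‖z‖ : ℂ) := by
  set a := Complex.arg z with ha
  nth_rewrite 1 [← Complex.norm_mul_exp_arg_mul_I z]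
  rw [← ha, show Complex.exp (-(a : ℂ) * Complex.I) *
      ((‖z‖ : ℂ) * Complex.exp ((a : ℂ) * Complex.I)) =
      (‖z‖ : ℂ) * Complex.exp (-(a : ℂ) * Complex.I +
        (a : ℂ) * Complex.I) by rw [Complex.exp_add]; ring]
  simp

lemma abs_exp_neg_arg (a : ℝ) :
    ‖Complex.exp (-(a : ℂ) * Complex.I)‖ = 1 := by
  rw [show (-(a : ℂ)) = ((-a : ℝ) : ℂ) by push_cast; ring]
  exact Complex.norm_exp_ofReal_mul_I _

/-- Proposition 3 of the paper: any rate pair between the lower and upper boundary curves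
is achievable by a single jamming beamformer within the power budget, delivering exactly
jamming power φ₁ at receiver 1 and φ₂ at receiver 2. -/
theorem stmt14 (n : ℕ) (hn : 1 ≤ n) (g₁ g₂ : EuclideanSpace ℂ (Fin n))
    (hli : LinearIndependent ℂ ![g₁, g₂]) (P : ℝ) (hP : 0 < P)
    (gh1 gperp ghperp : EuclideanSpace ℂ (Fin n))
    (hgh1 : gh1 = (‖g₁‖⁻¹ : ℝ) • g₁)
    (hgperp : gperp = g₂ - ⟪gh1, g₂⟫_ℂ • gh1)
    (hghperp : ghperp = (‖gperp‖⁻¹ : ℝ) • gperp)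
    (B₁ B₂ : ℝ)
    (hB₁ : B₁ = ‖⟪g₂, gh1⟫_ℂ‖)
    (hB₂ : B₂ = ‖⟪g₂, ghperp⟫_ℂ‖)
    (φ₁ φ₂ : ℝ) (hφ₁0 : 0 ≤ φ₁) (hφ₂0 : 0 ≤ φ₂) (hφ₁P : φ₁ ≤ P * ‖g₁‖ ^ 2)
    (m : ℝ) (hm : m = Real.sqrt φ₁ / ‖g₁‖)
    (hband : |m * B₁ - Real.sqrt φ₂| ≤ Real.sqrt (P - m ^ 2) * B₂) :
    let ε₁ : ℂ := (m : ℂ) * Complex.exp (-(Complex.arg ⟪g₂, gh1⟫_ℂ : ℂ) * Complex.I)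
    let ε₂ : ℂ := (((Real.sqrt φ₂ - m * B₁) / B₂ : ℝ) : ℂ) *
      Complex.exp (-(Complex.arg ⟪g₂, ghperp⟫_ℂ : ℂ) * Complex.I)
    let w : EuclideanSpace ℂ (Fin n) := ε₁ • gh1 + ε₂ • ghperp
    ‖w‖ ^ 2 ≤ P ∧
    ‖⟪g₁, w⟫_ℂ‖ ^ 2 = φ₁ ∧
    ‖⟪g₂, w⟫_ℂ‖ ^ 2 = φ₂ := by
  intro ε₁ ε₂ w
  -- basic nonvanishing
  have hg1 : g₁ ≠ 0 := by
    intro h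
    have := hli.ne_zero 0
    simp [h] at this
  have hg2 : g₂ ≠ 0 := by
    intro h
    have := hli.ne_zero 1
    simp [h] at this
  have hn1 : (0:ℝ) < ‖g₁‖ := norm_pos_iff.mpr hg1
  have hgh1' : gh1 = ((‖g₁‖⁻¹ : ℝ) : ℂ) • g₁ := by rw [hgh1, Complex.coe_smul]
  have hgh1norm : ‖gh1‖ = 1 := by
    rw [hgh1, norm_smul, Real.norm_eq_abs, abs_of_pos (inv_pos.mpr hn1),
      inv_mul_cancel₀ hn1.ne']
  have hgh1self : ⟪gh1, gh1⟫_ℂ = 1 := by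
    rw [inner_self_eq_norm_sq_to_K, hgh1norm]; norm_num
  have hperp0 : ⟪gh1, gperp⟫_ℂ = 0 := by
    rw [hgperp, inner_sub_right, inner_smul_right, hgh1self, mul_one, sub_self]
  have hg1perp0 : ⟪g₁, gperp⟫_ℂ = 0 := by
    have h := hperp0
    rw [hgh1', inner_smul_left] at h
    simp only [Complex.conj_ofReal] at h
    rcases mul_eq_zero.mp h with h' | h'
    · exact absurd (Complex.ofReal_eq_zero.mp h') (inv_ne_zero hn1.ne')
    · exact h'
  have hgperpne : gperp ≠ 0 := by
    intro h
    have h2 : g₂ = ⟪gh1, g₂⟫_ℂ • gh1 := by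
      have h0 := hgperp
      rw [h, eq_comm, sub_eq_zero] at h0
      exact h0
    rw [hgh1', smul_smul] at h2
    obtain ⟨b, hb⟩ : ∃ b : ℂ, g₂ = b • g₁ := ⟨_, h2⟩
    have hpair := linearIndependent_fin2.mp hli
    simp only [Matrix.cons_val_one, Matrix.head_cons, Matrix.cons_val_zero] at hpair
    by_cases hb0 : b = 0
    · rw [hb0, zero_smul] at hb; exact hpair.1 hb
    · exact hpair.2 b⁻¹ (by rw [hb, smul_smul, inv_mul_cancel₀ hb0, one_smul])
  have hnperp : (0:ℝ) < ‖gperp‖ := norm_pos_iff.mpr hgperpne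
  have hghperp' : ghperp = ((‖gperp‖⁻¹ : ℝ) : ℂ) • gperp := by
    rw [hghperp, Complex.coe_smul]
  have hghperpnorm : ‖ghperp‖ = 1 := by
    rw [hghperp, norm_smul, Real.norm_eq_abs, abs_of_pos (inv_pos.mpr hnperp),
      inv_mul_cancel₀ hnperp.ne']
  have hgh1ghperp : ⟪gh1, ghperp⟫_ℂ = 0 := by
    rw [hghperp', inner_smul_right, hperp0, mul_zero]
  have hg1ghperp : ⟪g₁, ghperp⟫_ℂ = 0 := by
    rw [hghperp', inner_smul_right, hg1perp0, mul_zero]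
  have hg1gh1 : ⟪g₁, gh1⟫_ℂ = (‖g₁‖ : ℂ) := by
    rw [hgh1', inner_smul_right, inner_self_eq_norm_sq_to_K]
    norm_cast
    rw [pow_two]
    push_cast
    field_simp
    have : (‖g₁‖ : ℂ) ≠ 0 := by exact_mod_cast hn1.ne'
    rw [pow_two, mul_div_assoc]
    simp [this]
  have hg2gperp : ⟪g₂, gperp⟫_ℂ = ((‖gperp‖ ^ 2 : ℝ) : ℂ) := by
    have hsplit : g₂ = gperp + ⟪gh1, g₂⟫_ℂ • gh1 := by rw [hgperp]; abel
    nth_rewrite 1 [hsplit]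
    rw [inner_add_left, inner_smul_left, hperp0, inner_self_eq_norm_sq_to_K,
      mul_zero, add_zero]
    norm_cast
  have hg2ghperp : ⟪g₂, ghperp⟫_ℂ = ((‖gperp‖ : ℝ) : ℂ) := by
    rw [hghperp', inner_smul_right, hg2gperp]
    norm_cast
    field_simp
  have hB₂val : B₂ = ‖gperp‖ := by
    rw [hB₂, hg2ghperp, Complex.norm_real, Real.norm_eq_abs, abs_of_pos hnperp]
  have hB₂pos : (0:ℝ) < B₂ := hB₂val ▸ hnperp
  have hm0 : 0 ≤ m := by
    rw [hm]; positivity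
  -- m^2 ≤ P
  have hm2 : m ^ 2 = φ₁ / ‖g₁‖ ^ 2 := by
    rw [hm, div_pow, Real.sq_sqrt hφ₁0]
  have hPm : 0 ≤ P - m ^ 2 := by
    rw [hm2, sub_nonneg, div_le_iff₀ (by positivity)]
    linarith
  -- inner products with w
  have hinner1 : ⟪g₁, w⟫_ℂ = ε₁ * (‖g₁‖ : ℂ) := by
    show ⟪g₁, ε₁ • gh1 + ε₂ • ghperp⟫_ℂ = _
    rw [inner_add_right, inner_smul_right, inner_smul_right, hg1gh1, hg1ghperp,
      mul_zero, add_zero]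
  have habs1 : ‖⟪g₁, w⟫_ℂ‖ = Real.sqrt φ₁ := by
    rw [hinner1, norm_mul, Complex.norm_real, Real.norm_eq_abs, abs_of_pos hn1]
    have : ‖ε₁‖ = m := by
      show ‖(m:ℂ) * _‖ = m
      rw [norm_mul, abs_exp_neg_arg, mul_one, Complex.norm_real, Real.norm_eq_abs, abs_of_nonneg hm0]
    rw [this, hm, div_mul_cancel₀ _ hn1.ne']
  have hinner2 : ⟪g₂, w⟫_ℂ = ((Real.sqrt φ₂ : ℝ) : ℂ) := by
    show ⟪g₂, ε₁ • gh1 + ε₂ • ghperp⟫_ℂ = _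
    rw [inner_add_right, inner_smul_right, inner_smul_right]
    show ((m:ℂ) * _) * _ + ((((Real.sqrt φ₂ - m * B₁) / B₂ : ℝ) : ℂ) * _) * _ = _
    rw [mul_assoc, mul_assoc, exp_neg_arg_mul_self, exp_neg_arg_mul_self,
      ← hB₁, ← hB₂]
    norm_cast
    field_simp
    ring
  have habs2 : ‖⟪g₂, w⟫_ℂ‖ = Real.sqrt φ₂ := by
    rw [hinner2, Complex.norm_real, Real.norm_eq_abs, abs_of_nonneg (Real.sqrt_nonneg _)]
  -- norm of w
  have habsε₁ : ‖ε₁‖ = m := by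
    show ‖(m:ℂ) * _‖ = m
    rw [norm_mul, abs_exp_neg_arg, mul_one, Complex.norm_real, Real.norm_eq_abs, abs_of_nonneg hm0]
  have habsε₂ : ‖ε₂‖ = |Real.sqrt φ₂ - m * B₁| / B₂ := by
    show ‖_ * _‖ = _
    rw [norm_mul, abs_exp_neg_arg, mul_one, Complex.norm_real, Real.norm_eq_abs, abs_div,
      abs_of_pos hB₂pos]
  have hwnorm : ‖w‖ ^ 2 = m ^ 2 + (|Real.sqrt φ₂ - m * B₁| / B₂) ^ 2 := by
    show ‖ε₁ • gh1 + ε₂ • ghperp‖ ^ 2 = _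
    rw [norm_add_sq (𝕜 := ℂ)]
    rw [inner_smul_left, inner_smul_right, hgh1ghperp, mul_zero, mul_zero]
    simp only [map_zero, mul_zero, add_zero]
    rw [norm_smul, norm_smul, hgh1norm, hghperpnorm, mul_one, mul_one]
    rw [habsε₁, habsε₂]
  refine ⟨?_, ?_, ?_⟩
  · rw [hwnorm]
    have h1 : |Real.sqrt φ₂ - m * B₁| ≤ Real.sqrt (P - m ^ 2) * B₂ := by
      rw [abs_sub_comm]; exact hband
    have h2 : (|Real.sqrt φ₂ - m * B₁| / B₂) ^ 2 ≤ P - m ^ 2 := by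
      rw [div_pow, div_le_iff₀ (by positivity)]
      calc |Real.sqrt φ₂ - m * B₁| ^ 2 ≤ (Real.sqrt (P - m ^ 2) * B₂) ^ 2 := by
            apply sq_le_sq' _ h1
            linarith [abs_nonneg (Real.sqrt φ₂ - m * B₁), (by positivity : (0:ℝ) ≤ Real.sqrt (P - m^2) * B₂)]
        _ = (P - m ^ 2) * B₂ ^ 2 := by rw [mul_pow, Real.sq_sqrt hPm]
    linarith
  · rw [habs1, Real.sq_sqrt hφ₁0]
  · rw [habs2, Real.sq_sqrt hφ₂0]
end

section
/- Let N ≥ 1, let h₁, h₂ ∈ ℂᴺ, and let P₁ > 0 and σ² > 0. Then the matrix M = P₁·h₁h₁ᴴ + σ²·I is Hermitian positive definite (hence invertible), and the real number h₂ᴴM⁻¹h₂ satisfies h₂ᴴM⁻¹h₂ ≤ ‖h₂‖²/σ², with equality if and only if ⟨h₁, h₂⟩ = 0. Consequently, for any P₂ > 0, log₂(1 + P₂·h₂ᴴM⁻¹h₂) ≤ log₂(1 + P₂·‖h₂‖²/σ²). (This is the paper's claim R²_{[2,1]} ≤ R²_{[1,2]} in Section IV: decoding and cancelling link 1's signal first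 strictly increases the achievable rate of eavesdropping link 2 whenever the two eavesdropping channels are not orthogonal, so the MMSE-SIC achievable region contains the MMSE achievable region.) -/
open Matrix
open scoped ComplexOrder

/-- Section IV claim of the paper (R²_{[2,1]} ≤ R²_{[1,2]}): M = P₁h₁h₁ᴴ + σ²I is
Hermitian positive definite, h₂ᴴM⁻¹h₂ ≤ ‖h₂‖²/σ² with equality iff ⟨h₁, h₂⟩ = 0, and
hence the MMSE rate of link 2 is at most its MMSE-SIC rate. -/
theorem stmt15 (N : ℕ) (hN : 1 ≤ N) (h₁ h₂ : Fin N → ℂ)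
    (P₁ P₂ σ2 : ℝ) (hP₁ : 0 < P₁) (hP₂ : 0 < P₂) (hσ : 0 < σ2) :
    let M : Matrix (Fin N) (Fin N) ℂ :=
      (P₁ : ℂ) • Matrix.vecMulVec h₁ (star h₁) + (σ2 : ℂ) • (1 : Matrix (Fin N) (Fin N) ℂ)
    M.PosDef ∧ IsUnit M ∧
    (star h₂ ⬝ᵥ M⁻¹.mulVec h₂).re ≤ (star h₂ ⬝ᵥ h₂).re / σ2 ∧
    ((star h₂ ⬝ᵥ M⁻¹.mulVec h₂).re = (star h₂ ⬝ᵥ h₂).re / σ2 ↔ star h₁ ⬝ᵥ h₂ = 0) ∧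
    Real.logb 2 (1 + P₂ * (star h₂ ⬝ᵥ M⁻¹.mulVec h₂).re) ≤
      Real.logb 2 (1 + P₂ * ((star h₂ ⬝ᵥ h₂).re / σ2)) := by
  intro M
  set A : Matrix (Fin N) (Fin N) ℂ := Matrix.vecMulVec h₁ (star h₁) with hA_def
  -- A applied to a vector
  have hAmulVec : ∀ x : Fin N → ℂ, A.mulVec x = (star h₁ ⬝ᵥ x) • h₁ := by
    intro x
    funext i
    simp only [hA_def, mulVec, dotProduct, vecMulVec_apply, Pi.smul_apply, smul_eq_mul]
    rw [Finset.sum_mul]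
    exact Finset.sum_congr rfl fun k _ => by ring
  -- `t = ‖h₁‖²`
  obtain ⟨t, ht0, ht⟩ : ∃ t : ℝ, 0 ≤ t ∧ star h₁ ⬝ᵥ h₁ = (t : ℂ) := by
    have h := dotProduct_star_self_nonneg h₁
    rw [Complex.nonneg_iff] at h
    exact ⟨(star h₁ ⬝ᵥ h₁).re, h.1, Complex.ext (by simp) (by simp [← h.2])⟩
  -- `u = ‖h₂‖²`
  obtain ⟨u, hu0, hu⟩ : ∃ u : ℝ, 0 ≤ u ∧ star h₂ ⬝ᵥ h₂ = (u : ℂ) := by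
    have h := dotProduct_star_self_nonneg h₂
    rw [Complex.nonneg_iff] at h
    exact ⟨(star h₂ ⬝ᵥ h₂).re, h.1, Complex.ext (by simp) (by simp [← h.2])⟩
  have hure : (star h₂ ⬝ᵥ h₂).re = u := by rw [hu, Complex.ofReal_re]
  -- M is positive definite
  have hM_mulVec : ∀ x : Fin N → ℂ,
      M.mulVec x = (P₁ : ℂ) • ((star h₁ ⬝ᵥ x) • h₁) + (σ2 : ℂ) • x := by
    intro x
    simp only [M, add_mulVec, smul_mulVec, one_mulVec, ← hA_def, hAmulVec]
  have hherm : M.IsHermitian := by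
    have hAh : Aᴴ = A := by
      ext i j
      simp [hA_def, conjTranspose_apply, vecMulVec_apply, mul_comm]
    show Mᴴ = M
    simp only [M, conjTranspose_add, conjTranspose_smul, conjTranspose_one, ← hA_def, hAh,
      Complex.star_def, Complex.conj_ofReal]
  have hPD : M.PosDef := by
    refine Matrix.PosDef.of_dotProduct_mulVec_pos hherm fun x hx => ?_
    rw [hM_mulVec, dotProduct_add, dotProduct_smul, dotProduct_smul, dotProduct_smul]
    have hsx : star x ⬝ᵥ h₁ = star (star h₁ ⬝ᵥ x) := star_dotProduct _ _
    refine add_pos_of_nonneg_of_pos ?_ ?_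
    · rw [smul_eq_mul, smul_eq_mul, hsx, Complex.star_def, Complex.mul_conj]
      have : (P₁ : ℂ) * ((Complex.normSq (star h₁ ⬝ᵥ x) : ℝ) : ℂ)
          = ((P₁ * Complex.normSq (star h₁ ⬝ᵥ x) : ℝ) : ℂ) := by push_cast; ring
      rw [this, Complex.zero_le_real]
      exact mul_nonneg hP₁.le (Complex.normSq_nonneg _)
    · rw [smul_eq_mul]
      exact mul_pos (by exact_mod_cast hσ) (Matrix.dotProduct_star_self_pos_iff.mpr hx)
  -- explicit inverse (Sherman–Morrison)
  have hden : 0 < σ2 + P₁ * t := by positivity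
  set d : ℝ := P₁ / (σ2 + P₁ * t) with hd_def
  have hd_pos : 0 < d := div_pos hP₁ hden
  set B : Matrix (Fin N) (Fin N) ℂ :=
    ((σ2 : ℂ))⁻¹ • ((1 : Matrix (Fin N) (Fin N) ℂ) - (d : ℂ) • A) with hB_def
  have hAA : A * A = (t : ℂ) • A := by
    ext i j
    simp only [hA_def, mul_apply, vecMulVec_apply, Matrix.smul_apply, smul_eq_mul, ← ht, dotProduct]
    rw [Finset.sum_mul]
    exact Finset.sum_congr rfl fun k _ => by ring
  have hMA : M * A = (((P₁ * t + σ2 : ℝ)) : ℂ) • A := by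
    have hc : ((P₁ * t + σ2 : ℝ) : ℂ) = (P₁ : ℂ) * (t : ℂ) + (σ2 : ℂ) := by push_cast; ring
    simp only [M, Matrix.add_mul, Matrix.smul_mul, ← hA_def, hAA, Matrix.one_mul, hc, add_smul, smul_smul]
  have hdP : (d : ℂ) * (((P₁ * t + σ2 : ℝ)) : ℂ) = (P₁ : ℂ) := by
    have : d * (P₁ * t + σ2) = P₁ := by
      rw [hd_def, div_mul_eq_mul_div, div_eq_iff hden.ne']
      ring
    exact_mod_cast this
  have hσ2ne : (σ2 : ℂ) ≠ 0 := by exact_mod_cast hσ.ne'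
  have hMB : M * B = 1 := by
    rw [hB_def, Matrix.mul_smul, Matrix.mul_sub, Matrix.mul_one, Matrix.mul_smul, hMA,
      smul_smul, hdP]
    have : M - (P₁ : ℂ) • A = (σ2 : ℂ) • (1 : Matrix (Fin N) (Fin N) ℂ) := by
      simp only [M]
      abel
    rw [this, smul_smul, inv_mul_cancel₀ hσ2ne, one_smul]
  have hMinv : M⁻¹ = B := inv_eq_right_inv hMB
  -- the value of the quadratic form with the inverse
  set s : ℂ := star h₁ ⬝ᵥ h₂ with hs_def
  set q : ℝ := Complex.normSq s with hq_def
  have hval : star h₂ ⬝ᵥ M⁻¹.mulVec h₂ = (((u - d * q) / σ2 : ℝ) : ℂ) := by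
    rw [hMinv, hB_def, smul_mulVec, sub_mulVec, one_mulVec, smul_mulVec, hAmulVec]
    rw [dotProduct_smul, dotProduct_sub, dotProduct_smul, dotProduct_smul]
    have hsx : star h₂ ⬝ᵥ h₁ = star s := star_dotProduct _ _
    rw [hsx, hu]
    simp only [smul_eq_mul, ← hs_def]
    rw [Complex.star_def, Complex.mul_conj, ← hq_def]
    push_cast
    ring
  have hre : (star h₂ ⬝ᵥ M⁻¹.mulVec h₂).re = (u - d * q) / σ2 := by
    rw [hval, Complex.ofReal_re]
  have hq0 : 0 ≤ q := Complex.normSq_nonneg s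
  -- the main inequality
  have hub : u - d * q ≤ u := by nlinarith [mul_nonneg hd_pos.le hq0]
  have hineq : (u - d * q) / σ2 ≤ u / σ2 := by gcongr
  -- nonnegativity of the value
  have hval_nonneg : 0 ≤ (u - d * q) / σ2 := by
    rw [← hre]
    have := hPD.inv.posSemidef.re_dotProduct_nonneg h₂
    simpa using this
  refine ⟨hPD, hPD.isUnit, ?_, ?_, ?_⟩
  · rw [hre, hure]; exact hineq
  · rw [hre, hure]
    constructor
    · intro h
      have hdq : d * q = 0 := by
        field_simp at h
        linarith
      have : q = 0 := by
        rcases mul_eq_zero.mp hdq with h' | h'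
        · exact absurd h' hd_pos.ne'
        · exact h'
      rw [hq_def] at this
      exact Complex.normSq_eq_zero.mp this
    · intro h
      have : q = 0 := by rw [hq_def, h, Complex.normSq_zero]
      rw [this, mul_zero, sub_zero]
  · apply Real.logb_le_logb_of_le (by norm_num)
    · rw [hre]; nlinarith [mul_nonneg hP₂.le hval_nonneg]
    · rw [hre, hure]
      exact add_le_add_right (mul_le_mul_of_nonneg_left hineq hP₂.le) 1
end
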